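/- arXiv:1107.3834 — 6 statements merged into one kernel-verified Lean document; each statement's English description precedes it below -/
import Mathlib

section
/- The lattice N constructed from the root lattice A_1^{24} and the extended binary Golay code is an even unimodular positive-definite lattice of rank 24. -/
def indic (s : Finset ℕ) : Fin 24 → ZMod 2 := fun i => if (i : ℕ) + 1 ∈ s then 1 else 0

def golayBasisSets : Fin 12 → Finset ℕ :=
  ![{1,2,16,18,5,12,22,3}, {7,4,19,10,12,15,8,16}, {23,3,9,19,13,18,8,11},
    {6,3,22,4,21,17,15,9}, {20,10,11,17,14,13,22,12}, {24,2,10,19,9,5,14,21},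
    {8,7,15,17,11,23,18,16}, {16,1,2,21,4,7,8,18}, {18,1,16,8,23,13,14,5},
    {8,7,15,9,19,23,4,22,13,18,1,16}, {18,23,13,22,3,1,11,10,2,16,7,8},
    {16,1,2,10,12,7,5,9,15,8,23,18}]

def golayCode : Submodule (ZMod 2) (Fin 24 → ZMod 2) :=
  Submodule.span (ZMod 2) (Set.range fun i => indic (golayBasisSets i))

def g24' (j : Fin 12) : Fin 24 → ZMod 2 := indic (golayBasisSets j)

def Hc : Fin 12 → Fin 24 → ZMod 2 :=
  ![![1,0,0,0,0,0,0,0,0,0,0,0,1,0,1,0,1,1,1,0,0,0,1,1],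
    ![0,1,0,0,0,0,0,0,0,0,0,0,1,1,1,1,1,0,0,1,0,0,1,0],
    ![0,0,1,0,0,0,0,0,0,0,0,0,1,1,0,1,0,0,1,0,1,0,1,1],
    ![0,0,0,1,0,0,0,0,0,0,0,0,1,1,0,0,0,1,1,1,0,1,1,0],
    ![0,0,0,0,1,0,0,0,0,0,0,0,1,1,0,0,1,1,0,1,1,0,0,1],
    ![0,0,0,0,0,1,0,0,0,0,0,0,0,1,1,0,0,1,1,0,1,1,0,1],
    ![0,0,0,0,0,0,1,0,0,0,0,0,0,0,1,1,0,0,1,1,0,1,1,1],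
    ![0,0,0,0,0,0,0,1,0,0,0,0,1,0,1,1,0,1,1,1,1,0,0,0],
    ![0,0,0,0,0,0,0,0,1,0,0,0,0,1,0,1,1,0,1,1,1,1,0,0],
    ![0,0,0,0,0,0,0,0,0,1,0,0,0,0,1,0,1,1,0,1,1,1,1,0],
    ![0,0,0,0,0,0,0,0,0,0,1,0,1,0,1,1,1,0,0,0,1,1,0,1],
    ![0,0,0,0,0,0,0,0,0,0,0,1,0,1,0,1,1,1,0,0,0,1,1,1]]

def Dc : Fin 12 → Fin 24 → ZMod 2 :=
  ![![1,1,1,1,1,0,0,1,0,0,1,0,1,0,0,0,0,0,0,0,0,0,0,0],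
    ![0,1,1,1,1,1,0,0,1,0,0,1,0,1,0,0,0,0,0,0,0,0,0,0],
    ![1,1,0,0,0,1,1,1,0,1,1,0,0,0,1,0,0,0,0,0,0,0,0,0],
    ![0,1,1,0,0,0,1,1,1,0,1,1,0,0,0,1,0,0,0,0,0,0,0,0],
    ![1,1,0,0,1,0,0,0,1,1,1,1,0,0,0,0,1,0,0,0,0,0,0,0],
    ![1,0,0,1,1,1,0,1,0,1,0,1,0,0,0,0,0,1,0,0,0,0,0,0],
    ![1,0,1,1,0,1,1,1,1,0,0,0,0,0,0,0,0,0,1,0,0,0,0,0],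
    ![0,1,0,1,1,0,1,1,1,1,0,0,0,0,0,0,0,0,0,1,0,0,0,0],
    ![0,0,1,0,1,1,0,1,1,1,1,0,0,0,0,0,0,0,0,0,1,0,0,0],
    ![0,0,0,1,0,1,1,0,1,1,1,1,0,0,0,0,0,0,0,0,0,1,0,0],
    ![1,1,1,1,0,0,1,0,0,1,0,1,0,0,0,0,0,0,0,0,0,0,1,0],
    ![1,0,1,0,1,1,1,0,0,0,1,1,0,0,0,0,0,0,0,0,0,0,0,1]]

def Ec : Fin 12 → Fin 12 → ZMod 2 :=
  ![![1,0,1,0,0,1,1,1,1,1,0,1],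
    ![1,1,0,0,1,0,0,0,0,1,1,1],
    ![1,1,0,0,0,1,0,0,0,1,0,0],
    ![0,1,0,0,1,0,1,0,0,0,0,0],
    ![1,0,1,0,1,1,0,0,1,0,0,0],
    ![0,1,0,1,0,1,1,1,0,1,1,1],
    ![0,0,1,0,1,1,1,1,0,1,1,1],
    ![0,0,0,0,1,0,1,1,1,1,0,1],
    ![1,1,0,0,1,0,0,1,0,0,1,1],
    ![1,0,1,0,1,0,0,1,1,1,0,0],
    ![0,0,1,0,0,1,1,0,1,0,1,0],
    ![1,0,0,0,0,1,1,1,0,1,1,0]]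

def Fc : Fin 12 → Fin 12 → ZMod 2 :=
  ![![0,1,1,0,0,0,0,0,0,0,0,1],
    ![1,1,1,1,0,0,1,1,1,0,0,1],
    ![1,0,0,1,0,0,1,1,0,0,0,1],
    ![0,1,0,0,0,0,0,0,0,1,1,0],
    ![0,0,0,0,0,0,1,0,0,0,0,1],
    ![0,0,1,1,0,0,1,1,0,1,0,1],
    ![1,0,0,1,0,0,1,1,0,1,1,1],
    ![0,1,1,0,1,0,1,0,1,0,1,0],
    ![0,1,1,1,0,0,1,0,0,0,1,1],
    ![1,1,1,1,0,0,1,1,0,0,1,1],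
    ![1,1,1,0,0,0,0,0,0,0,1,1],
    ![0,0,0,1,0,1,1,0,1,1,0,1]]

lemma DF1 : ∀ j k : Fin 12, ∑ i, g24' j i * g24' k i = 0 := by decide
lemma DF2 : ∀ j : Fin 12, (∑ i, (g24' j i).val) % 4 = 0 := by decide
lemma Hc_eq : ∀ j, Hc j = fun i => ∑ k, Ec j k * g24' k i := by decide
lemma Dc_eq : ∀ m, Dc m = fun i => ∑ k, Fc m k * g24' k i := by decide
lemma DF6 : ∀ k j : Fin 12, Hc k (Fin.castAdd 12 j) = if k = j then 1 else 0 := by decide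
lemma DF6' : ∀ k j : Fin 12, (Hc k (Fin.castAdd 12 j)).val = if k = j then 1 else 0 := by decide
lemma DF7 : ∀ m m' : Fin 12, Dc m (Fin.natAdd 12 m') = if m = m' then 1 else 0 := by decide
lemma castAdd_ne_natAdd : ∀ j m : Fin 12, Fin.castAdd 12 j ≠ Fin.natAdd 12 m := by decide
lemma natAdd_inj : ∀ m m' : Fin 12, Fin.natAdd 12 m = Fin.natAdd 12 m' → m = m' := by decide
lemma zmod2_val_cast : ∀ a : ZMod 2, ((a.val : ℤ) : ZMod 2) = a := by decide
lemma zmod2_val_castN : ∀ a : ZMod 2, ((a.val : ZMod 2)) = a := by decide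
lemma zmod2_add_self : ∀ a : ZMod 2, a + a = 0 := by decide
lemma zmod2_cases : ∀ a : ZMod 2, a = 0 ∨ a = 1 := by decide
lemma zmod2_add_val : ∀ a b : ZMod 2, (((a + b).val : ℤ)) = a.val + b.val - 2 * (a.val * b.val) := by decide
lemma zmod2_eq_of_add : ∀ a b : ZMod 2, a + b = 0 → a = b := by decide

lemma g24_mem (j : Fin 12) : g24' j ∈ golayCode := Submodule.subset_span ⟨j, rfl⟩

lemma comb_mem {n : ℕ} (c : Fin n → ZMod 2) (x : Fin n → Fin 24 → ZMod 2)
    (hx : ∀ k, x k ∈ golayCode) : (fun i => ∑ k, c k * x k i) ∈ golayCode := by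
  have h : (∑ k, c k • x k) ∈ golayCode :=
    Submodule.sum_smul_mem _ c (fun k _ => hx k)
  have e : (fun i => ∑ k, c k * x k i) = ∑ k, c k • x k := by
    funext i; simp [Finset.sum_apply]
  rw [e]; exact h

lemma Hc_mem (j : Fin 12) : Hc j ∈ golayCode := by
  rw [Hc_eq j]; exact comb_mem _ _ g24_mem

lemma Dc_mem (m : Fin 12) : Dc m ∈ golayCode := by
  rw [Dc_eq m]; exact comb_mem _ _ g24_mem

lemma dot_code_zero (z : Fin 24 → ZMod 2) (hz : ∀ k, ∑ i, z i * g24' k i = 0) :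
    ∀ x ∈ golayCode, ∑ i, z i * x i = 0 := by
  intro x hx
  induction hx using Submodule.span_induction with
  | mem x hx => obtain ⟨j, rfl⟩ := hx; exact hz j
  | zero => simp
  | add x y hx hy ihx ihy =>
      simp only [Pi.add_apply, mul_add, Finset.sum_add_distrib, ihx, ihy, add_zero]
  | smul a x hx ihx =>
      simp only [Pi.smul_apply, smul_eq_mul, mul_left_comm, ← Finset.mul_sum, ihx, mul_zero]

lemma dot_gen_zero : ∀ x ∈ golayCode, ∀ k : Fin 12, ∑ i, x i * g24' k i = 0 := by
  intro x hx
  induction hx using Submodule.span_induction with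
  | mem x hx => obtain ⟨j, rfl⟩ := hx; exact fun k => DF1 j k
  | zero => intro k; simp
  | add x y hx hy ihx ihy =>
      intro k
      simp only [Pi.add_apply, add_mul, Finset.sum_add_distrib, ihx k, ihy k, add_zero]
  | smul a x hx ihx =>
      intro k
      simp only [Pi.smul_apply, smul_eq_mul, mul_assoc, ← Finset.mul_sum, ihx k, mul_zero]

lemma dot_zero : ∀ x ∈ golayCode, ∀ y ∈ golayCode, ∑ i, x i * y i = 0 :=
  fun x hx y hy => dot_code_zero x (fun k => dot_gen_zero x hx k) y hy

lemma wt_four : ∀ x ∈ golayCode, (4:ℤ) ∣ ∑ i, ((x i).val : ℤ) := by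
  intro x hx
  induction hx using Submodule.span_induction with
  | mem x hx =>
      obtain ⟨j, rfl⟩ := hx
      have h := DF2 j
      have : (4:ℕ) ∣ ∑ i, (g24' j i).val := Nat.dvd_of_mod_eq_zero h
      have := Int.natCast_dvd_natCast.2 this
      push_cast at this
      exact this
  | zero => simp
  | add x y hx hy ihx ihy =>
      have key : (∑ i, (((x + y) i).val : ℤ))
          = (∑ i, ((x i).val : ℤ)) + (∑ i, ((y i).val : ℤ))
            - 2 * ∑ i, ((x i).val : ℤ) * ((y i).val : ℤ) := by
        calc (∑ i, (((x + y) i).val : ℤ))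
            = ∑ i, (((x i).val : ℤ) + ((y i).val : ℤ)
                - 2 * (((x i).val : ℤ) * ((y i).val : ℤ))) :=
              Finset.sum_congr rfl fun i _ => by simpa using zmod2_add_val (x i) (y i)
          _ = _ := by rw [Finset.sum_sub_distrib, Finset.sum_add_distrib, Finset.mul_sum]
      have hS : (2:ℤ) ∣ ∑ i, ((x i).val : ℤ) * ((y i).val : ℤ) := by
        have h0 : (((∑ i, ((x i).val : ℤ) * ((y i).val : ℤ) : ℤ)) : ZMod 2) = 0 := by
          push_cast [zmod2_val_castN, zmod2_val_cast]
          exact dot_zero x hx y hy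
        exact_mod_cast (ZMod.intCast_zmod_eq_zero_iff_dvd _ 2).1 h0
      obtain ⟨s, hs⟩ := hS
      rw [key, hs]
      obtain ⟨a, ha⟩ := ihx
      obtain ⟨b, hb⟩ := ihy
      exact ⟨a + b - s, by rw [ha, hb]; ring⟩
  | smul a x hx ihx =>
      rcases zmod2_cases a with h | h
      · subst h; simp
      · subst h; simpa using ihx

lemma sum24_split {M : Type} [AddCommMonoid M] (F : Fin 24 → M) :
    ∑ i, F i = (∑ j : Fin 12, F (Fin.castAdd 12 j)) + ∑ m : Fin 12, F (Fin.natAdd 12 m) := by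
  have h : ∑ i : Fin (12 + 12), F (Fin.cast (by norm_num) i)
      = (∑ j : Fin 12, F (Fin.cast (by norm_num) (Fin.castAdd 12 j)))
        + ∑ m : Fin 12, F (Fin.cast (by norm_num) (Fin.natAdd 12 m)) :=
    Fin.sum_univ_add (f := fun i : Fin (12+12) => F (Fin.cast (by norm_num) i))
  rw [Fintype.sum_equiv (finCongr (by norm_num : 12 + 12 = 24)).symm F
      (fun i => F (Fin.cast (by norm_num) i)) (fun i => rfl)] at *
  rw [h]
  congr 1

lemma fin24_addCases {P : Fin 24 → Prop} (h1 : ∀ j : Fin 12, P (Fin.castAdd 12 j))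
    (h2 : ∀ m : Fin 12, P (Fin.natAdd 12 m)) : ∀ i, P i := by
  intro i
  have := Fin.addCases (m := 12) (n := 12)
    (motive := fun i => P (Fin.cast (by norm_num) i))
    (fun j => h1 j) (fun m => h2 m) (Fin.cast (by norm_num) i)
  simpa using this

lemma dual_repr (c : Fin 24 → ZMod 2) (hc : ∀ k, ∑ i, c i * g24' k i = 0) :
    c = fun i => ∑ j, c (Fin.castAdd 12 j) * Hc j i := by
  set x0 : Fin 24 → ZMod 2 := fun i => ∑ j, c (Fin.castAdd 12 j) * Hc j i with hx0
  have hx0mem : x0 ∈ golayCode := comb_mem _ _ Hc_mem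
  set y : Fin 24 → ZMod 2 := fun i => c i + x0 i with hy
  have hyI : ∀ j : Fin 12, y (Fin.castAdd 12 j) = 0 := by
    intro j
    have e1 : x0 (Fin.castAdd 12 j) = c (Fin.castAdd 12 j) := by
      simp only [hx0]
      calc (∑ k, c (Fin.castAdd 12 k) * Hc k (Fin.castAdd 12 j))
          = ∑ k, if k = j then c (Fin.castAdd 12 k) else 0 :=
            Finset.sum_congr rfl fun k _ => by rw [DF6 k j]; split <;> simp
        _ = c (Fin.castAdd 12 j) := by rw [Finset.sum_ite_eq']; simp
    simp only [hy, e1]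
    exact zmod2_add_self _
  have hyJ : ∀ m : Fin 12, y (Fin.natAdd 12 m) = 0 := by
    intro m
    have h1 : ∑ i, c i * Dc m i = 0 := dot_code_zero c hc (Dc m) (Dc_mem m)
    have h2 : ∑ i, x0 i * Dc m i = 0 := dot_zero x0 hx0mem (Dc m) (Dc_mem m)
    have hyD : ∑ i, y i * Dc m i = 0 := by
      simp only [hy, add_mul, Finset.sum_add_distrib, h1, h2, add_zero]
    rw [sum24_split (fun i => y i * Dc m i)] at hyD
    have e2 : (∑ j : Fin 12, y (Fin.castAdd 12 j) * Dc m (Fin.castAdd 12 j)) = 0 :=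
      Finset.sum_eq_zero fun j _ => by rw [hyI j, zero_mul]
    have e3 : (∑ m' : Fin 12, y (Fin.natAdd 12 m') * Dc m (Fin.natAdd 12 m'))
        = y (Fin.natAdd 12 m) := by
      calc (∑ m' : Fin 12, y (Fin.natAdd 12 m') * Dc m (Fin.natAdd 12 m'))
          = ∑ m' : Fin 12, if m = m' then y (Fin.natAdd 12 m') else 0 :=
            Finset.sum_congr rfl fun m' _ => by rw [DF7 m m']; split <;> simp
        _ = y (Fin.natAdd 12 m) := by rw [Finset.sum_ite_eq]; simp
    rw [e2, e3, zero_add] at hyD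
    exact hyD
  funext i
  have hy0 : y i = 0 := fin24_addCases (P := fun i => y i = 0) hyI hyJ i
  exact zmod2_eq_of_add _ _ hy0

/-- The ambient 24-dimensional rational quadratic space. -/
abbrev V24 := Fin 24 → ℚ

/-- The bilinear form on `V24` for which the standard basis vectors have norm 2. -/
def B24 (u v : V24) : ℚ := 2 * ∑ i, u i * v i

/-- The generators `f_n` of the root sublattice `R` of type `A₁²⁴`. -/
def f24 (n : Fin 24) : V24 := fun i => if i = n then 1 else 0

/-- The Niemeier lattice `N` of type `A₁²⁴`:
`N = { v ∈ (1/2)R : (v mod R) ∈ 𝒢₂₄ }`. -/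
def NSet : Set V24 :=
  { v | ∃ w : Fin 24 → ℤ, (∀ i, v i = (w i : ℚ) / 2) ∧
      (fun i => ((w i : ZMod 2))) ∈ golayCode }



lemma zmod2_two : (2 : ZMod 2) = 0 := by decide

lemma sq_mod4 (t : ℤ) : (4:ℤ) ∣ t * t - (((t : ZMod 2)).val : ℤ) := by
  rcases Int.even_or_odd t with ⟨m, rfl⟩ | ⟨m, rfl⟩
  · have h0 : ((m + m : ℤ) : ZMod 2) = 0 := by
      push_cast
      exact zmod2_add_self _
    rw [h0, (by decide : (((0:ZMod 2)).val : ℤ) = 0)]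
    exact ⟨m * m, by ring⟩
  · have h1 : ((2 * m + 1 : ℤ) : ZMod 2) = 1 := by
      push_cast
      simp [zmod2_two]
    rw [h1, (by decide : (((1:ZMod 2)).val : ℤ) = 1)]
    exact ⟨m * m + m, by ring⟩

lemma code_dot_even (w x : Fin 24 → ℤ)
    (hw : (fun i => ((w i : ZMod 2))) ∈ golayCode)
    (hx : (fun i => ((x i : ZMod 2))) ∈ golayCode) :
    (2:ℤ) ∣ ∑ i, w i * x i := by
  have h0 : ((∑ i, w i * x i : ℤ) : ZMod 2) = 0 := by
    push_cast
    exact dot_zero _ hw _ hx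
  exact_mod_cast (ZMod.intCast_zmod_eq_zero_iff_dvd _ 2).1 h0

lemma B24_half (w x : Fin 24 → ℤ) :
    B24 (fun i => (w i : ℚ)/2) (fun i => (x i : ℚ)/2) = ((∑ i, w i * x i : ℤ) : ℚ) / 2 := by
  unfold B24
  rw [show (∑ i, ((w i : ℚ)/2) * ((x i : ℚ)/2)) = ∑ i, ((w i : ℚ) * (x i : ℚ))/4 from
    Finset.sum_congr rfl fun i _ => by ring, ← Finset.sum_div]
  push_cast
  ring

lemma f24_mem (n : Fin 24) : f24 n ∈ NSet := by
  refine ⟨fun i => if i = n then 2 else 0, fun i => ?_, ?_⟩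
  · unfold f24; by_cases h : i = n <;> simp [h]
  · have e : (fun i => (((if i = n then (2:ℤ) else 0) : ℤ) : ZMod 2)) = (0 : Fin 24 → ZMod 2) := by
      funext i; split <;> simp [zmod2_two]
    rw [e]; exact Submodule.zero_mem _

lemma half_mem (x : Fin 24 → ZMod 2) (hx : x ∈ golayCode) :
    (fun i => (((x i).val : ℤ) : ℚ) / 2) ∈ NSet := by
  refine ⟨fun i => ((x i).val : ℤ), fun i => rfl, ?_⟩
  have e : (fun i => ((((x i).val : ℤ)) : ZMod 2)) = x := funext fun i => zmod2_val_cast _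
  rw [e]; exact hx

def bI : Fin 12 → V24 := fun j i => (((Hc j i).val : ℤ) : ℚ)/2
def bJ : Fin 12 → V24 := fun m i => if i = Fin.natAdd 12 m then 1 else 0
def bb : Fin 24 → V24 := Fin.append bI bJ
def WI : Fin 12 → Fin 24 → ℤ := fun j i => ((Hc j i).val : ℤ)
def WJ : Fin 12 → Fin 24 → ℤ := fun m i => if i = Fin.natAdd 12 m then 2 else 0
def WW : Fin 24 → Fin 24 → ℤ := Fin.append WI WJ

lemma bb_left (j : Fin 12) : bb (Fin.castAdd 12 j) = bI j := Fin.append_left _ _ _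
lemma bb_right (m : Fin 12) : bb (Fin.natAdd 12 m) = bJ m := Fin.append_right _ _ _
lemma WW_left (j : Fin 12) : WW (Fin.castAdd 12 j) = WI j := Fin.append_left _ _ _
lemma WW_right (m : Fin 12) : WW (Fin.natAdd 12 m) = WJ m := Fin.append_right _ _ _

lemma bb_WW (idx : Fin 24) : ∀ p, bb idx p = ((WW idx p : ℤ) : ℚ)/2 := by
  refine fin24_addCases (P := fun idx => ∀ p, bb idx p = ((WW idx p : ℤ) : ℚ)/2) ?_ ?_ idx
  · intro j p; rw [bb_left, WW_left]; rfl
  · intro m p; rw [bb_right, WW_right]; unfold bJ WJ; split <;> norm_num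

lemma WW_code (idx : Fin 24) : (fun p => ((WW idx p : ZMod 2))) ∈ golayCode := by
  refine fin24_addCases (P := fun idx => (fun p => ((WW idx p : ZMod 2))) ∈ golayCode) ?_ ?_ idx
  · intro j
    rw [WW_left]
    have e : (fun p => ((WI j p : ZMod 2))) = Hc j := funext fun p => zmod2_val_cast _
    rw [e]; exact Hc_mem j
  · intro m
    rw [WW_right]
    have e : (fun p => ((WJ m p : ZMod 2))) = (0 : Fin 24 → ZMod 2) := by
      funext p; unfold WJ; split <;> simp [zmod2_two]
    rw [e]; exact Submodule.zero_mem _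

/-- The lattice `N` constructed from the root lattice `A₁²⁴` and the extended binary
Golay code is an even, integral, unimodular (self-dual), positive-definite lattice,
free of rank 24. -/
theorem niemeier_even_unimodular_posdef_rank24 :
    (∀ v ∈ NSet, ∃ k : ℤ, B24 v v = 2 * k) ∧
    (∀ v ∈ NSet, ∀ u ∈ NSet, ∃ k : ℤ, B24 v u = k) ∧
    (∀ v : V24, (∀ u ∈ NSet, ∃ k : ℤ, B24 v u = k) → v ∈ NSet) ∧
    (∀ v ∈ NSet, v ≠ 0 → 0 < B24 v v) ∧
    (∃ b : Fin 24 → V24, NSet = { v | ∃ c : Fin 24 → ℤ, v = ∑ i, c i • b i }) := by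


  refine ⟨?_, ?_, ?_, ?_, ?_⟩
  · -- even
    rintro v ⟨w, hw, hcode⟩
    have hveq : v = fun i => (w i : ℚ)/2 := funext hw
    have hA : (4:ℤ) ∣ ∑ i, (w i * w i - (((w i : ZMod 2)).val : ℤ)) :=
      Finset.dvd_sum fun i _ => sq_mod4 (w i)
    have hB : (4:ℤ) ∣ ∑ i, (((w i : ZMod 2)).val : ℤ) := wt_four _ hcode
    obtain ⟨u1, hu1⟩ := hA
    obtain ⟨u2, hu2⟩ := hB
    rw [Finset.sum_sub_distrib, hu2] at hu1
    have hs : ∑ i, w i * w i = 4 * (u1 + u2) := by linarith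
    refine ⟨u1 + u2, ?_⟩
    rw [hveq, B24_half, hs]
    push_cast; ring
  · -- integral
    rintro v ⟨w, hw, hwc⟩ u ⟨x, hx, hxc⟩
    obtain ⟨s, hs⟩ := code_dot_even w x hwc hxc
    refine ⟨s, ?_⟩
    rw [funext hw, funext hx, B24_half, hs]
    push_cast; ring
  · -- self-dual
    intro v hv
    have hBf : ∀ n, B24 v (f24 n) = 2 * v n := by
      intro n
      unfold B24 f24
      congr 1
      calc (∑ i, v i * if i = n then (1:ℚ) else 0)
          = ∑ i, if i = n then v i else 0 :=
            Finset.sum_congr rfl fun i _ => by split <;> simp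
        _ = v n := by rw [Finset.sum_ite_eq']; simp
    have h2v : ∀ n, ∃ t : ℤ, v n = (t : ℚ)/2 := by
      intro n
      obtain ⟨t, ht⟩ := hv (f24 n) (f24_mem n)
      exact ⟨t, by rw [← ht, hBf n]; ring⟩
    choose k hk using h2v
    have hveq : v = fun i => (k i : ℚ)/2 := funext hk
    have hcg : ∀ j : Fin 12, ∑ i, ((k i : ZMod 2)) * g24' j i = 0 := by
      intro j
      obtain ⟨t, ht⟩ := hv _ (half_mem (g24' j) (g24_mem j))
      rw [hveq, B24_half] at ht
      have hS : (∑ i, k i * ((g24' j i).val : ℤ)) = 2 * t := by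
        have h2 : ((∑ i, k i * ((g24' j i).val : ℤ) : ℤ) : ℚ) = 2 * t := by
          rw [← ht]; ring
        exact_mod_cast h2
      have h0 : ((∑ i, k i * ((g24' j i).val : ℤ) : ℤ) : ZMod 2) = 0 := by
        rw [hS]; push_cast; simp [zmod2_two]
      push_cast [zmod2_val_castN, zmod2_val_cast] at h0
      exact h0
    have hcode : (fun i => ((k i : ZMod 2))) ∈ golayCode := by
      rw [dual_repr _ hcg]
      exact comb_mem _ _ Hc_mem
    exact ⟨k, hk, hcode⟩
  · -- positive definite
    rintro v ⟨w, hw, hwc⟩ hv0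
    have hex : ∃ i, v i ≠ 0 := by
      by_contra h; push_neg at h; exact hv0 (funext h)
    obtain ⟨i0, hi0⟩ := hex
    unfold B24
    have hpos : 0 < ∑ i, v i * v i :=
      Finset.sum_pos' (fun i _ => mul_self_nonneg _)
        ⟨i0, Finset.mem_univ _, mul_self_pos.2 hi0⟩
    linarith
  · -- free of rank 24
    refine ⟨bb, Set.ext fun v => ⟨?_, ?_⟩⟩
    · rintro ⟨w, hw, hcode⟩
      have hrep := dual_repr (fun i => ((w i : ZMod 2)))
        (fun kk => dot_zero _ hcode _ (g24_mem kk))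
      have hdvd : ∀ m : Fin 12, (2:ℤ) ∣
          (w (Fin.natAdd 12 m) - ∑ j, w (Fin.castAdd 12 j) * WI j (Fin.natAdd 12 m)) := by
        intro m
        have h1 := congrFun hrep (Fin.natAdd 12 m)
        have h0 : ((w (Fin.natAdd 12 m)
            - ∑ j, w (Fin.castAdd 12 j) * WI j (Fin.natAdd 12 m) : ℤ) : ZMod 2) = 0 := by
          unfold WI
          push_cast [zmod2_val_castN, zmod2_val_cast]
          rw [sub_eq_zero]
          exact h1
        exact_mod_cast (ZMod.intCast_zmod_eq_zero_iff_dvd _ 2).1 h0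
      refine ⟨Fin.append (fun j : Fin 12 => w (Fin.castAdd 12 j))
        (fun m : Fin 12 => (w (Fin.natAdd 12 m)
          - ∑ j, w (Fin.castAdd 12 j) * WI j (Fin.natAdd 12 m)) / 2), ?_⟩
      set aa : Fin 24 → ℤ := Fin.append (fun j : Fin 12 => w (Fin.castAdd 12 j))
        (fun m : Fin 12 => (w (Fin.natAdd 12 m)
          - ∑ j, w (Fin.castAdd 12 j) * WI j (Fin.natAdd 12 m)) / 2) with haa
      funext p
      rw [Finset.sum_apply]
      rw [sum24_split (F := fun idx => (aa idx • bb idx) p)]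
      have eL : (∑ j : Fin 12, (aa (Fin.castAdd 12 j) • bb (Fin.castAdd 12 j)) p)
          = ∑ j : Fin 12, (w (Fin.castAdd 12 j) : ℚ) * bI j p := by
        refine Finset.sum_congr rfl fun j _ => ?_
        rw [haa, Pi.smul_apply, bb_left, Fin.append_left, zsmul_eq_mul]
      have eR : (∑ m : Fin 12, (aa (Fin.natAdd 12 m) • bb (Fin.natAdd 12 m)) p)
          = ∑ m : Fin 12, ((((w (Fin.natAdd 12 m)
              - ∑ j, w (Fin.castAdd 12 j) * WI j (Fin.natAdd 12 m)) / 2 : ℤ)) : ℚ)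
              * bJ m p := by
        refine Finset.sum_congr rfl fun m _ => ?_
        rw [haa, Pi.smul_apply, bb_right, Fin.append_right, zsmul_eq_mul]
      rw [eL, eR, hw p]
      refine fin24_addCases (P := fun p => (w p : ℚ)/2
        = (∑ j : Fin 12, (w (Fin.castAdd 12 j) : ℚ) * bI j p)
          + ∑ m : Fin 12, ((((w (Fin.natAdd 12 m)
              - ∑ j, w (Fin.castAdd 12 j) * WI j (Fin.natAdd 12 m)) / 2 : ℤ)) : ℚ)
              * bJ m p) ?_ ?_ p
      · intro j0
        have e1 : (∑ j : Fin 12, (w (Fin.castAdd 12 j) : ℚ) * bI j (Fin.castAdd 12 j0))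
            = (w (Fin.castAdd 12 j0) : ℚ)/2 := by
          calc (∑ j : Fin 12, (w (Fin.castAdd 12 j) : ℚ) * bI j (Fin.castAdd 12 j0))
              = ∑ j : Fin 12, if j = j0 then (w (Fin.castAdd 12 j) : ℚ)/2 else 0 := by
                refine Finset.sum_congr rfl fun j _ => ?_
                unfold bI
                rw [DF6' j j0]
                by_cases h : j = j0
                · rw [if_pos h, if_pos h]; push_cast; ring
                · rw [if_neg h, if_neg h]; push_cast; ring
            _ = (w (Fin.castAdd 12 j0) : ℚ)/2 := by rw [Finset.sum_ite_eq']; simp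
        have e2 : (∑ m : Fin 12, ((((w (Fin.natAdd 12 m)
              - ∑ j, w (Fin.castAdd 12 j) * WI j (Fin.natAdd 12 m)) / 2 : ℤ)) : ℚ)
              * bJ m (Fin.castAdd 12 j0)) = 0 := by
          refine Finset.sum_eq_zero fun m _ => ?_
          unfold bJ
          rw [if_neg (castAdd_ne_natAdd j0 m), mul_zero]
        rw [e1, e2, add_zero]
      · intro m0
        have e2 : (∑ m : Fin 12, ((((w (Fin.natAdd 12 m)
              - ∑ j, w (Fin.castAdd 12 j) * WI j (Fin.natAdd 12 m)) / 2 : ℤ)) : ℚ)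
              * bJ m (Fin.natAdd 12 m0))
            = ((((w (Fin.natAdd 12 m0)
              - ∑ j, w (Fin.castAdd 12 j) * WI j (Fin.natAdd 12 m0)) / 2 : ℤ)) : ℚ) := by
          calc _ = ∑ m : Fin 12, if m = m0 then ((((w (Fin.natAdd 12 m)
                - ∑ j, w (Fin.castAdd 12 j) * WI j (Fin.natAdd 12 m)) / 2 : ℤ)) : ℚ) else 0 := by
                refine Finset.sum_congr rfl fun m _ => ?_
                unfold bJ
                by_cases h : m = m0
                · subst h; rw [if_pos rfl, if_pos rfl, mul_one]
                · rw [if_neg h, if_neg (fun hc => h (natAdd_inj _ _ hc).symm), mul_zero]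
            _ = _ := by rw [Finset.sum_ite_eq']; simp
        rw [e2]
        have hq : (2:ℤ) * ((w (Fin.natAdd 12 m0)
            - ∑ j, w (Fin.castAdd 12 j) * WI j (Fin.natAdd 12 m0)) / 2)
            = w (Fin.natAdd 12 m0)
              - ∑ j, w (Fin.castAdd 12 j) * WI j (Fin.natAdd 12 m0) :=
          Int.mul_ediv_cancel' (hdvd m0)
        have hq' : (2:ℚ) * (((w (Fin.natAdd 12 m0)
            - ∑ j, w (Fin.castAdd 12 j) * WI j (Fin.natAdd 12 m0)) / 2 : ℤ) : ℚ)
            = (w (Fin.natAdd 12 m0) : ℚ)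
              - ∑ j, (w (Fin.castAdd 12 j) : ℚ) * ((WI j (Fin.natAdd 12 m0) : ℤ) : ℚ) := by
          exact_mod_cast congrArg (fun z : ℤ => (z : ℚ)) hq
        have hsum : (∑ j : Fin 12, (w (Fin.castAdd 12 j) : ℚ) * bI j (Fin.natAdd 12 m0))
            = (∑ j : Fin 12, (w (Fin.castAdd 12 j) : ℚ)
                * ((WI j (Fin.natAdd 12 m0) : ℤ) : ℚ)) / 2 := by
          rw [Finset.sum_div]
          refine Finset.sum_congr rfl fun j _ => ?_
          unfold bI WI
          ring
        rw [hsum]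
        linarith
    · rintro ⟨cc, rfl⟩
      refine ⟨fun p => ∑ idx, cc idx * WW idx p, fun p => ?_, ?_⟩
      · rw [Finset.sum_apply]
        have e : ∀ idx : Fin 24, (cc idx • bb idx) p = ((cc idx * WW idx p : ℤ) : ℚ)/2 := by
          intro idx
          rw [Pi.smul_apply, bb_WW idx p, zsmul_eq_mul]
          push_cast
          ring
        rw [Finset.sum_congr rfl fun idx _ => e idx, ← Finset.sum_div]
        push_cast
        ring
      · have e : (fun p => ((∑ idx, cc idx * WW idx p : ℤ) : ZMod 2))
            = fun p => ∑ idx, ((cc idx : ZMod 2)) * ((WW idx p : ZMod 2)) := by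
          funext p; push_cast; rfl
        rw [e]
        exact comb_mem _ _ WW_code
end

section
/- If Γ is an even unimodular lattice and Λ ⊂ Γ is a non-degenerate primitive sublattice with orthogonal complement V = Λ^⊥ ∩ Γ, then the discriminant forms of Λ and V satisfy q_Λ = -q_V under a canonical isomorphism of discriminant groups, and Γ ≅ { (λ, v) ∈ Λ* ⊕ V* : γ(λ mod Λ) = v mod V } for that isomorphism γ: Λ*/Λ → V*/V. -/
open Submodule

variable {V : Type*} [AddCommGroup V] [Module ℚ V]

/-- The dual lattice `L* = {v ∈ span_ℚ L : B(v, L) ⊆ ℤ}` of a lattice `L` inside a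
rational quadratic space. -/
def dualLat (B : V →ₗ[ℚ] V →ₗ[ℚ] ℚ) (L : Submodule ℤ V) : Submodule ℤ V where
  carrier := { v | v ∈ span ℚ (L : Set V) ∧ ∀ w ∈ L, ∃ k : ℤ, B v w = k }
  add_mem' := by
    rintro a b ⟨haS, ha⟩ ⟨hbS, hb⟩
    refine ⟨add_mem haS hbS, fun w hw => ?_⟩
    obtain ⟨k, hk⟩ := ha w hw
    obtain ⟨l, hl⟩ := hb w hw
    exact ⟨k + l, by simp [hk, hl]⟩
  zero_mem' := ⟨zero_mem _, fun w _ => ⟨0, by simp⟩⟩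
  smul_mem' := by
    rintro c v ⟨hvS, hv⟩
    refine ⟨zsmul_mem hvS c, fun w hw => ?_⟩
    obtain ⟨k, hk⟩ := hv w hw
    refine ⟨c * k, ?_⟩
    have : B (c • v) = c • B v := map_zsmul B c v
    rw [this]
    simp [hk, mul_comm]
  
/-- The orthogonal complement `Λ^⊥ ∩ Γ` of a sublattice `Λ` inside a lattice `Γ`. -/
def orthCompl (B : V →ₗ[ℚ] V →ₗ[ℚ] ℚ) (Γ Λ : Submodule ℤ V) : Submodule ℤ V where
  carrier := { v | v ∈ Γ ∧ ∀ w ∈ Λ, B v w = 0 }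
  add_mem' := by
    rintro a b ⟨haΓ, ha⟩ ⟨hbΓ, hb⟩
    exact ⟨add_mem haΓ hbΓ, fun w hw => by simp [ha w hw, hb w hw]⟩
  zero_mem' := ⟨zero_mem _, fun w _ => by simp⟩
  smul_mem' := by
    rintro c v ⟨hvΓ, hv⟩
    refine ⟨zsmul_mem hvΓ c, fun w hw => ?_⟩
    have : B (c • v) = c • B v := map_zsmul B c v
    rw [this]
    simp [hv w hw]

/-- The discriminant group `L*/L` of a lattice `L`. -/
abbrev Disc (B : V →ₗ[ℚ] V →ₗ[ℚ] ℚ) (L : Submodule ℤ V) :=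
  dualLat B L ⧸ (Submodule.comap (dualLat B L).subtype L)

theorem test : True := trivial

lemma mem_dualLat {B : V →ₗ[ℚ] V →ₗ[ℚ] ℚ} {L : Submodule ℤ V} {v : V} :
    v ∈ dualLat B L ↔ v ∈ span ℚ (L : Set V) ∧ ∀ w ∈ L, ∃ k : ℤ, B v w = k :=
  Iff.rfl

lemma mem_orthCompl {B : V →ₗ[ℚ] V →ₗ[ℚ] ℚ} {Γ Λ : Submodule ℤ V} {v : V} :
    v ∈ orthCompl B Γ Λ ↔ v ∈ Γ ∧ ∀ w ∈ Λ, B v w = 0 :=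
  Iff.rfl

lemma exists_int_smul_mem {S : Submodule ℤ V} {x : V}
    (hx : x ∈ span ℚ (S : Set V)) : ∃ n : ℤ, n ≠ 0 ∧ n • x ∈ S := by
  induction hx using span_induction with
  | mem x h => exact ⟨1, one_ne_zero, by simpa using h⟩
  | zero => exact ⟨1, one_ne_zero, by simp⟩
  | add x y hx hy ihx ihy =>
    obtain ⟨n, hn, hnx⟩ := ihx
    obtain ⟨m, hm, hmy⟩ := ihy
    refine ⟨n * m, mul_ne_zero hn hm, ?_⟩
    have : (n * m) • (x + y) = m • (n • x) + n • (m • y) := by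
      rw [smul_add]; rw [smul_smul, smul_smul]; ring_nf
    rw [this]
    exact add_mem (S.smul_mem m hnx) (S.smul_mem n hmy)
  | smul a x hx ih =>
    obtain ⟨n, hn, hnx⟩ := ih
    refine ⟨a.den * n, mul_ne_zero (by exact_mod_cast a.den_ne_zero) hn, ?_⟩
    have h1 : ((a.den : ℤ) * n) • (a • x) = (a.num * n) • x := by
      rw [← Int.cast_smul_eq_zsmul ℚ ((a.den : ℤ) * n), smul_smul,
        ← Int.cast_smul_eq_zsmul ℚ (a.num * n)]
      have hd : (a.den : ℚ) * a = a.num := by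
        have := Rat.num_div_den a
        exact Rat.den_mul_eq_num a
      push_cast
      rw [mul_comm (a.den : ℚ) (n : ℚ), mul_assoc, hd]
      ring
    rw [h1, mul_smul]
    exact S.smul_mem _ hnx

lemma bilin_nondeg [FiniteDimensional ℚ V] (B : V →ₗ[ℚ] V →ₗ[ℚ] ℚ)
    (hBnondeg : ∀ v : V, v ≠ 0 → ∃ u, B v u ≠ 0) :
    LinearMap.BilinForm.Nondegenerate B := by
  refine LinearMap.BilinForm.Nondegenerate.ofSeparatingLeft ?_
  intro v hv
  by_contra h
  obtain ⟨u, hu⟩ := hBnondeg v h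
  exact hu (hv u)

lemma lattice_finite [FiniteDimensional ℚ V] (B : V →ₗ[ℚ] V →ₗ[ℚ] ℚ)
    (hBnondeg : ∀ v : V, v ≠ 0 → ∃ u, B v u ≠ 0)
    (Γ : Submodule ℤ V)
    (hspan : span ℚ (Γ : Set V) = ⊤)
    (hΓint : ∀ u ∈ Γ, ∀ v ∈ Γ, ∃ k : ℤ, B u v = k) :
    Module.Finite ℤ Γ := by
  classical
  have hBnd := bilin_nondeg B hBnondeg
  obtain ⟨b, hbΓ, hbspan, hbind⟩ := exists_linearIndependent ℚ (Γ : Set V)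
  have hfin : b.Finite := hbind.setFinite
  haveI := hfin.fintype
  let bV : Module.Basis b ℚ V := Module.Basis.mk hbind (by
    rw [Subtype.range_coe, hbspan, hspan])
  let f : b → V := fun i => (LinearMap.BilinForm.toDual B hBnd).symm (bV.coord i)
  have hf : ∀ (i : b) (v : V), B (f i) v = bV.coord i v := fun i v =>
    LinearMap.BilinForm.apply_toDual_symm_apply (hB := hBnd) _ _
  set N : Submodule ℤ V := span ℤ (Set.range f) with hN
  have hΓN : ∀ x ∈ Γ, x ∈ N := by
    intro x hx
    have hk : ∀ i : b, ∃ k : ℤ, B x (bV i) = k := by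
      intro i
      have : (bV i : V) ∈ Γ := by
        have : (bV i : V) = (i : V) := by simp [bV]
        rw [this]; exact hbΓ i.2
      exact hΓint x hx _ this
    choose k hk using hk
    have hxg : x = ∑ i : b, (k i : ℚ) • f i := by
      have hz : ∀ v : V, B (x - ∑ i : b, (k i : ℚ) • f i) v
          = B x v - ∑ i : b, (k i : ℚ) * bV.coord i v := by
        intro v
        simp [map_sub, map_sum, hf, LinearMap.sub_apply, LinearMap.sum_apply,
          map_smul, smul_eq_mul]
      have hzero : x - ∑ i : b, (k i : ℚ) • f i = 0 := by
        apply hBnd.1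
        intro v
        have hv : v ∈ span ℚ (Set.range (fun i : b => (bV i : V))) := by
          rw [bV.span_eq]; trivial
        induction hv using span_induction with
        | mem y hy =>
          obtain ⟨j, rfl⟩ := hy
          rw [hz]
          show (B x) (bV j) - ∑ i : b, (k i : ℚ) * (bV.coord i) (bV j) = 0
          rw [hk j]
          rw [Finset.sum_eq_single j]
          · simp [bV.coord_apply, Module.Basis.repr_self]
          · intro i _ hij
            have hji : ¬ j = i := fun h => hij h.symm
            have : bV.coord i (bV j) = 0 := by
              simp [bV.coord_apply, Module.Basis.repr_self, Finsupp.single_apply, hji]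
            simp [this]
          · intro h; exact absurd (Finset.mem_univ j) h
        | zero => simp
        | add y z _ _ ihy ihz => rw [map_add, ihy, ihz, add_zero]
        | smul a y _ ihy => rw [map_smul, ihy, smul_zero]
      have := sub_eq_zero.mp hzero
      exact this
    rw [hxg]
    refine Submodule.sum_mem _ ?_
    intro i _
    rw [Int.cast_smul_eq_zsmul]
    exact Submodule.smul_mem _ _ (subset_span ⟨i, rfl⟩)
  have hNfg : N.FG := fg_span (Set.finite_range f)
  haveI : Module.Finite ℤ N := Module.Finite.iff_fg.mpr hNfg
  haveI : IsNoetherian ℤ N := isNoetherian_of_isNoetherianRing_of_finite ℤ N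
  have hΓfg : Γ.FG := by
    have h1 : (Submodule.comap N.subtype Γ).FG := IsNoetherian.noetherian _
    have h2 : Submodule.map N.subtype (Submodule.comap N.subtype Γ) = Γ := by
      rw [Submodule.map_comap_subtype]
      exact inf_eq_right.mpr hΓN
    rw [← h2]
    exact Submodule.FG.map _ h1
  exact Module.Finite.iff_fg.mpr hΓfg

lemma exists_lattice_rep [FiniteDimensional ℚ V] (B : V →ₗ[ℚ] V →ₗ[ℚ] ℚ)
    (hBnondeg : ∀ v : V, v ≠ 0 → ∃ u, B v u ≠ 0)
    (Γ S : Submodule ℤ V)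
    (hspan : span ℚ (Γ : Set V) = ⊤)
    (hΓfin : Module.Finite ℤ Γ)
    (hΓunimod : ∀ v : V, (∀ u ∈ Γ, ∃ k : ℤ, B v u = k) → v ∈ Γ)
    (hSΓ : S ≤ Γ)
    (hSprim : ∀ v ∈ Γ, (∃ k : ℤ, k ≠ 0 ∧ k • v ∈ S) → v ∈ S)
    (l : V) (hl : ∀ w ∈ S, ∃ k : ℤ, B l w = k) :
    ∃ x ∈ Γ, ∀ w ∈ S, B x w = B l w := by
  classical
  have hBnd := bilin_nondeg B hBnondeg
  haveI : NoZeroSMulDivisors ℤ V := by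
    constructor
    intro c x h
    rcases eq_or_ne c 0 with h0 | h0
    · exact Or.inl h0
    · refine Or.inr ?_
      rw [← Int.cast_smul_eq_zsmul ℚ] at h
      rcases smul_eq_zero.mp h with h1 | h1
      · exact absurd (by exact_mod_cast h1) h0
      · exact h1
  haveI := hΓfin
  set SΓ : Submodule ℤ Γ := Submodule.comap Γ.subtype S with hSΓdef
  haveI : NoZeroSMulDivisors ℤ (Γ ⧸ SΓ) := by
    constructor
    intro c q h
    rcases eq_or_ne c 0 with h0 | h0
    · exact Or.inl h0
    · refine Or.inr ?_
      obtain ⟨x, rfl⟩ := Submodule.Quotient.mk_surjective SΓ q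
      rw [← Submodule.Quotient.mk_smul, Submodule.Quotient.mk_eq_zero] at h
      have hx : x.1 ∈ S := by
        refine hSprim x.1 x.2 ⟨c, h0, ?_⟩
        simpa [hSΓdef] using h
      rw [Submodule.Quotient.mk_eq_zero]
      simpa [hSΓdef] using hx
  obtain ⟨s, hs⟩ := Module.projective_lifting_property SΓ.mkQ
    (LinearMap.id : (Γ ⧸ SΓ) →ₗ[ℤ] (Γ ⧸ SΓ)) (Submodule.mkQ_surjective SΓ)
  set π : Γ →ₗ[ℤ] Γ := LinearMap.id - s.comp SΓ.mkQ with hπdef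
  have hπS : ∀ x : Γ, (π x).1 ∈ S := by
    intro x
    have h0 : SΓ.mkQ (π x) = 0 := by
      simp only [hπdef, LinearMap.sub_apply, LinearMap.id_apply, LinearMap.comp_apply, map_sub]
      have : SΓ.mkQ (s (SΓ.mkQ x)) = SΓ.mkQ x := by
        have := congrFun (congrArg (fun f => f.toFun) hs) (SΓ.mkQ x)
        simpa using this
      rw [this, sub_self]
    have : π x ∈ SΓ := by rwa [← Submodule.Quotient.mk_eq_zero, ← Submodule.mkQ_apply]
    simpa [hSΓdef] using this
  have hπid : ∀ x : Γ, x.1 ∈ S → π x = x := by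
    intro x hx
    have hx' : x ∈ SΓ := by simpa [hSΓdef] using hx
    have : SΓ.mkQ x = 0 := by rwa [Submodule.mkQ_apply, Submodule.Quotient.mk_eq_zero]
    simp [hπdef, this]
  set ψ : Γ →ₗ[ℤ] ℚ := ((B l).restrictScalars ℤ).comp (Γ.subtype.comp π) with hψdef
  have hψ : ∀ x : Γ, ψ x = B l (π x).1 := fun x => rfl
  have hψint : ∀ x : Γ, ∃ k : ℤ, ψ x = k := fun x => hl (π x).1 (hπS x)
  -- basis of Γ and extension of ψ to V
  let ι := Module.Free.ChooseBasisIndex ℤ Γ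
  let bΓ : Module.Basis ι ℤ Γ := Module.Free.chooseBasis ℤ Γ
  have hind : LinearIndependent ℚ (fun i : ι => (bΓ i : V)) := by
    have h1 : LinearIndependent ℤ (fun i : ι => (bΓ i : V)) := by
      have := bΓ.linearIndependent
      exact this.map' Γ.subtype (Submodule.ker_subtype Γ)
    exact (LinearIndependent.iff_fractionRing ℤ ℚ).mp h1
  have hspan2 : ⊤ ≤ span ℚ (Set.range (fun i : ι => (bΓ i : V))) := by
    rw [← hspan]
    rw [Submodule.span_le]
    intro x hx
    have h1 : x ∈ Submodule.map Γ.subtype (span ℤ (Set.range bΓ)) := by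
      rw [bΓ.span_eq, Submodule.map_subtype_top]
      exact hx
    rw [Submodule.map_span] at h1
    have h2 : Γ.subtype '' Set.range bΓ = Set.range (fun i : ι => (bΓ i : V)) := by
      ext y; simp [Set.mem_image, Set.mem_range]
    rw [h2] at h1
    exact Submodule.span_subset_span ℤ ℚ _ h1
  let bV : Module.Basis ι ℚ V := Module.Basis.mk hind hspan2
  set F : V →ₗ[ℚ] ℚ := bV.constr ℚ (fun i => ψ (bΓ i)) with hFdef
  have hagree : ∀ x : Γ, F x.1 = ψ x := by
    have : (F.restrictScalars ℤ).comp Γ.subtype = ψ := by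
      apply bΓ.ext
      intro i
      have : F (bΓ i : V) = F (bV i) := by rw [Module.Basis.mk_apply]
      simp only [LinearMap.comp_apply, LinearMap.restrictScalars_apply, Submodule.subtype_apply]
      rw [this, hFdef, Module.Basis.constr_basis]
    intro x
    have := congrFun (congrArg (fun f => f.toFun) this) x
    simpa using this
  set x₀ : V := (LinearMap.BilinForm.toDual B hBnd).symm F with hx₀def
  have hx₀ : ∀ v : V, B x₀ v = F v := fun v =>
    LinearMap.BilinForm.apply_toDual_symm_apply (hB := hBnd) _ _
  have hx₀Γ : x₀ ∈ Γ := by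
    apply hΓunimod
    intro u hu
    obtain ⟨k, hk⟩ := hψint ⟨u, hu⟩
    exact ⟨k, by rw [hx₀]; exact (hagree ⟨u, hu⟩).trans hk⟩
  refine ⟨x₀, hx₀Γ, ?_⟩
  intro w hw
  rw [hx₀]
  rw [show F w = ψ ⟨w, hSΓ hw⟩ from hagree ⟨w, hSΓ hw⟩, hψ, hπid ⟨w, hSΓ hw⟩ hw]


/-- **Gluing (Nikulin).** If `Γ` is an even unimodular lattice and `Λ ⊂ Γ` a
non-degenerate primitive sublattice with orthogonal complement `𝒱 = Λ^⊥ ∩ Γ`, then the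
discriminant forms satisfy `q_Λ = -q_𝒱` under a canonical isomorphism
`γ : Λ*/Λ → 𝒱*/𝒱` of the discriminant groups, and `Γ` is exactly the glued lattice
`{(λ, v) ∈ Λ* ⊕ 𝒱* : γ(λ mod Λ) = v mod 𝒱}` (realised inside the ambient space). -/
theorem gluing {V : Type*} [AddCommGroup V] [Module ℚ V] [FiniteDimensional ℚ V]
    (B : V →ₗ[ℚ] V →ₗ[ℚ] ℚ)
    (hBsymm : ∀ u v, B u v = B v u)
    (hBnondeg : ∀ v : V, v ≠ 0 → ∃ u, B v u ≠ 0)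
    (Γ Λ : Submodule ℤ V)
    (hspan : span ℚ (Γ : Set V) = ⊤)
    (hΓint : ∀ u ∈ Γ, ∀ v ∈ Γ, ∃ k : ℤ, B u v = k)
    (hΓeven : ∀ v ∈ Γ, ∃ k : ℤ, B v v = 2 * k)
    (hΓunimod : ∀ v : V, (∀ u ∈ Γ, ∃ k : ℤ, B v u = k) → v ∈ Γ)
    (hΛΓ : Λ ≤ Γ)
    (hΛprim : ∀ v ∈ Γ, (∃ k : ℤ, k ≠ 0 ∧ k • v ∈ Λ) → v ∈ Λ)
    (hΛnondeg : ∀ v ∈ span ℚ (Λ : Set V), v ≠ 0 → ∃ w ∈ Λ, B v w ≠ 0) :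
    ∃ γ : Disc B Λ ≃+ Disc B (orthCompl B Γ Λ),
      (∀ (l : dualLat B Λ) (w : dualLat B (orthCompl B Γ Λ)),
        γ (Submodule.Quotient.mk l) = Submodule.Quotient.mk w →
          ∃ k : ℤ, B l.1 l.1 + B w.1 w.1 = 2 * k) ∧
      (∀ x : V, x ∈ Γ ↔ ∃ (l : dualLat B Λ) (w : dualLat B (orthCompl B Γ Λ)),
        x = l.1 + w.1 ∧ γ (Submodule.Quotient.mk l) = Submodule.Quotient.mk w) := by
  classical
  have hBnd := bilin_nondeg B hBnondeg
  have hΓfin := lattice_finite B hBnondeg Γ hspan hΓint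
  set U : Submodule ℚ V := span ℚ (Λ : Set V) with hUdef
  have hrefl : LinearMap.BilinForm.IsRefl B := fun u v h => by rw [hBsymm]; exact h
  have hUnd : (LinearMap.BilinForm.restrict B U).Nondegenerate := by
    refine LinearMap.BilinForm.Nondegenerate.ofSeparatingLeft ?_
    intro u hu
    by_contra hne
    have hu1 : u.1 ≠ 0 := fun h => hne (Subtype.ext h)
    obtain ⟨w, hwΛ, hw⟩ := hΛnondeg u.1 u.2 hu1
    exact hw (hu ⟨w, subset_span hwΛ⟩)
  have hcompl : IsCompl U (LinearMap.BilinForm.orthogonal B U) :=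
    LinearMap.BilinForm.isCompl_orthogonal_of_restrict_nondegenerate hrefl hUnd
  set Wo : Submodule ℚ V := LinearMap.BilinForm.orthogonal B U with hWodef
  set pr := Submodule.linearProjOfIsCompl U Wo hcompl with hprdef
  have hqW : ∀ x : V, x - (pr x : V) ∈ Wo := by
    intro x
    rw [← Submodule.linearProjOfIsCompl_apply_eq_zero_iff hcompl]
    rw [map_sub]
    rw [Submodule.linearProjOfIsCompl_apply_left hcompl (pr x)]
    exact sub_self _
  have horth : ∀ u ∈ U, ∀ w ∈ Wo, B u w = 0 := by
    intro u hu w hw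
    exact hw u hu
  set 𝒱 : Submodule ℤ V := orthCompl B Γ Λ with h𝒱def
  have h𝒱Γ : 𝒱 ≤ Γ := fun v hv => (mem_orthCompl.mp hv).1
  have h𝒱W : ∀ v ∈ 𝒱, v ∈ Wo := by
    intro v hv
    intro n hn
    induction hn using span_induction with
    | mem y hy => show B y v = 0; rw [hBsymm]; exact (mem_orthCompl.mp hv).2 y hy
    | zero => show B 0 v = 0; simp
    | add y z _ _ ihy ihz =>
      show B (y + z) v = 0
      rw [map_add, LinearMap.add_apply, ihy, ihz, add_zero]
    | smul a y _ ihy =>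
      show B (a • y) v = 0
      rw [map_smul, LinearMap.smul_apply, ihy, smul_zero]
  have hΓW𝒱 : ∀ v ∈ Γ, v ∈ Wo → v ∈ 𝒱 := by
    intro v hvΓ hvW
    refine mem_orthCompl.mpr ⟨hvΓ, fun w hw => ?_⟩
    rw [hBsymm]
    exact horth w (subset_span hw) v hvW
  have hΓU : ∀ v ∈ Γ, v ∈ U → v ∈ Λ := by
    intro v hvΓ hvU
    obtain ⟨n, hn, hnv⟩ := exists_int_smul_mem hvU
    exact hΛprim v hvΓ ⟨n, hn, hnv⟩
  have hspan𝒱 : span ℚ (𝒱 : Set V) = Wo := by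
    apply le_antisymm
    · rw [Submodule.span_le]
      intro v hv
      exact h𝒱W v hv
    · intro w hw
      have hw' : w ∈ span ℚ (Γ : Set V) := by rw [hspan]; trivial
      obtain ⟨n, hn, hnw⟩ := exists_int_smul_mem hw'
      have hnwW : n • w ∈ Wo := by
        rw [← Int.cast_smul_eq_zsmul ℚ]
        exact Submodule.smul_mem _ _ hw
      have hnw𝒱 : n • w ∈ 𝒱 := hΓW𝒱 _ hnw hnwW
      have h1 : ((n : ℚ)) • w ∈ span ℚ (𝒱 : Set V) := by
        rw [Int.cast_smul_eq_zsmul]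
        exact subset_span hnw𝒱
      have h2 := Submodule.smul_mem (span ℚ (𝒱 : Set V)) ((n : ℚ)⁻¹) h1
      rwa [smul_smul, inv_mul_cancel₀ (by exact_mod_cast hn), one_smul] at h2
  have hWnd : ∀ w ∈ Wo, (∀ v ∈ 𝒱, B w v = 0) → w = 0 := by
    intro w hwW hww
    by_contra hne
    obtain ⟨u, hu⟩ := hBnondeg w hne
    apply hu
    have hu2 : u ∈ U ⊔ Wo := by rw [hcompl.sup_eq_top]; trivial
    obtain ⟨a, ha, b, hb, rfl⟩ := Submodule.mem_sup.mp hu2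
    have hwa : B w a = 0 := by rw [hBsymm]; exact horth a ha w hwW
    have hwspan : ∀ c ∈ span ℚ (𝒱 : Set V), B w c = 0 := by
      intro c hc
      induction hc using span_induction with
      | mem y hy => exact hww y hy
      | zero => simp
      | add y z _ _ ihy ihz => rw [map_add, ihy, ihz, add_zero]
      | smul a y _ ihy => rw [map_smul, ihy, smul_zero]
    have hwb : B w b = 0 := hwspan b (by rw [hspan𝒱]; exact hb)
    rw [map_add, hwa, hwb, add_zero]
  have hpxdual : ∀ x ∈ Γ, (pr x : V) ∈ dualLat B Λ := by
    intro x hx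
    refine mem_dualLat.mpr ⟨(pr x).2, fun w hw => ?_⟩
    have h1 : B (x - (pr x : V)) w = 0 := by
      rw [hBsymm]
      exact horth w (subset_span hw) _ (hqW x)
    have h2 : B (pr x : V) w = B x w := by
      have := map_sub B x ((pr x : V))
      rw [this, LinearMap.sub_apply] at h1
      linarith
    rw [h2]
    exact hΓint x hx w (hΛΓ hw)
  have hqxdual : ∀ x ∈ Γ, x - (pr x : V) ∈ dualLat B 𝒱 := by
    intro x hx
    refine mem_dualLat.mpr ⟨by rw [hspan𝒱]; exact hqW x, fun v hv => ?_⟩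
    have h1 : B (pr x : V) v = 0 := horth _ (pr x).2 v (h𝒱W v hv)
    have h2 : B (x - (pr x : V)) v = B x v := by
      rw [map_sub, LinearMap.sub_apply, h1, sub_zero]
    rw [h2]
    exact hΓint x hx v (h𝒱Γ hv)
  have h𝒱prim : ∀ v ∈ Γ, (∃ k : ℤ, k ≠ 0 ∧ k • v ∈ 𝒱) → v ∈ 𝒱 := by
    rintro v hvΓ ⟨k, hk, hkv⟩
    refine mem_orthCompl.mpr ⟨hvΓ, fun w hw => ?_⟩
    have h1 : B (k • v) w = 0 := (mem_orthCompl.mp hkv).2 w hw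
    rw [← Int.cast_smul_eq_zsmul ℚ, map_smul, LinearMap.smul_apply, smul_eq_mul] at h1
    rcases mul_eq_zero.mp h1 with h | h
    · exact absurd (by exact_mod_cast h) hk
    · exact h
  have hP : ∀ l : dualLat B Λ, ∃ x, x ∈ Γ ∧ (pr x : V) = l.1 := by
    intro l
    obtain ⟨x, hxΓ, hx⟩ := exists_lattice_rep B hBnondeg Γ Λ hspan hΓfin hΓunimod hΛΓ
      hΛprim l.1 (fun w hw => l.2.2 w hw)
    refine ⟨x, hxΓ, ?_⟩
    have hdU : (pr x : V) - l.1 ∈ U := sub_mem (pr x).2 l.2.1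
    have hd0 : ∀ w ∈ Λ, B ((pr x : V) - l.1) w = 0 := by
      intro w hw
      have h1 : B (x - (pr x : V)) w = 0 := by
        rw [hBsymm]
        exact horth w (subset_span hw) _ (hqW x)
      have h2 : B (pr x : V) w = B x w := by
        rw [map_sub, LinearMap.sub_apply] at h1
        linarith
      rw [map_sub, LinearMap.sub_apply, h2, hx w hw, sub_self]
    have : (pr x : V) - l.1 = 0 := by
      by_contra hne
      obtain ⟨w, hwΛ, hw⟩ := hΛnondeg _ hdU hne
      exact hw (hd0 w hwΛ)
    exact sub_eq_zero.mp this
  have hQ : ∀ w : dualLat B 𝒱, ∃ x, x ∈ Γ ∧ x - (pr x : V) = w.1 := by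
    intro w
    obtain ⟨x, hxΓ, hx⟩ := exists_lattice_rep B hBnondeg Γ 𝒱 hspan hΓfin hΓunimod h𝒱Γ
      h𝒱prim w.1 (fun v hv => w.2.2 v hv)
    refine ⟨x, hxΓ, ?_⟩
    have hdW : (x - (pr x : V)) - w.1 ∈ Wo := by
      refine sub_mem (hqW x) ?_
      have := w.2.1
      rwa [hspan𝒱] at this
    have hd0 : ∀ v ∈ 𝒱, B ((x - (pr x : V)) - w.1) v = 0 := by
      intro v hv
      have h1 : B (pr x : V) v = 0 := horth _ (pr x).2 v (h𝒱W v hv)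
      rw [map_sub, map_sub, LinearMap.sub_apply, LinearMap.sub_apply, h1, sub_zero,
        hx v hv, sub_self]
    have := hWnd _ hdW hd0
    exact sub_eq_zero.mp this
  -- the forward gluing map on representatives
  set g0 : dualLat B Λ → Disc B 𝒱 := fun l =>
    Submodule.Quotient.mk ⟨(hP l).choose - (pr (hP l).choose : V),
      hqxdual _ (hP l).choose_spec.1⟩ with hg0def
  have hg0 : ∀ (l : dualLat B Λ) (w : dualLat B 𝒱),
      g0 l = Submodule.Quotient.mk w ↔ l.1 + w.1 ∈ Γ := by
    intro l w
    have hxΓ := (hP l).choose_spec.1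
    have hxp := (hP l).choose_spec.2
    set x := (hP l).choose
    rw [hg0def]
    simp only []
    rw [Submodule.Quotient.eq]
    have hmem : (⟨x - (pr x : V), hqxdual _ hxΓ⟩ - w ∈
        Submodule.comap (dualLat B 𝒱).subtype 𝒱) ↔ (x - (pr x : V)) - w.1 ∈ 𝒱 :=
      Iff.rfl
    rw [hmem]
    constructor
    · intro h
      have h2 : l.1 + w.1 = x - ((x - (pr x : V)) - w.1) := by rw [← hxp]; abel
      rw [h2]
      exact sub_mem hxΓ (h𝒱Γ h)
    · intro h
      have h2 : (x - (pr x : V)) - w.1 = x - (l.1 + w.1) := by rw [← hxp]; abel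
      refine hΓW𝒱 _ ?_ ?_
      · rw [h2]; exact sub_mem hxΓ h
      · refine sub_mem (hqW x) ?_
        have := w.2.1
        rwa [hspan𝒱] at this
  have hex : ∀ l : dualLat B Λ, ∃ w : dualLat B 𝒱,
      g0 l = Submodule.Quotient.mk w ∧ l.1 + w.1 ∈ Γ := by
    intro l
    refine ⟨⟨(hP l).choose - (pr (hP l).choose : V), hqxdual _ (hP l).choose_spec.1⟩,
      rfl, (hg0 _ _).mp rfl⟩
  -- the backward gluing map on representatives
  set d0 : dualLat B 𝒱 → Disc B Λ := fun w =>
    Submodule.Quotient.mk ⟨(pr (hQ w).choose : V), hpxdual _ (hQ w).choose_spec.1⟩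
    with hd0def
  have hd0 : ∀ (w : dualLat B 𝒱) (l : dualLat B Λ),
      d0 w = Submodule.Quotient.mk l ↔ l.1 + w.1 ∈ Γ := by
    intro w l
    have hxΓ := (hQ w).choose_spec.1
    have hxq := (hQ w).choose_spec.2
    set x := (hQ w).choose
    rw [hd0def]
    simp only []
    rw [Submodule.Quotient.eq]
    have hmem : (⟨(pr x : V), hpxdual _ hxΓ⟩ - l ∈
        Submodule.comap (dualLat B Λ).subtype Λ) ↔ (pr x : V) - l.1 ∈ Λ :=
      Iff.rfl
    rw [hmem]
    constructor
    · intro h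
      have h2 : l.1 + w.1 = x - ((pr x : V) - l.1) := by rw [← hxq]; abel
      rw [h2]
      exact sub_mem hxΓ (hΛΓ h)
    · intro h
      refine hΓU _ ?_ (sub_mem (pr x).2 l.2.1)
      have h2 : (pr x : V) - l.1 = x - (l.1 + w.1) := by rw [← hxq]; abel
      rw [h2]
      exact sub_mem hxΓ h
  have hexd : ∀ w : dualLat B 𝒱, ∃ l : dualLat B Λ,
      d0 w = Submodule.Quotient.mk l ∧ l.1 + w.1 ∈ Γ := by
    intro w
    refine ⟨⟨(pr (hQ w).choose : V), hpxdual _ (hQ w).choose_spec.1⟩,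
      rfl, (hd0 _ _).mp rfl⟩
  -- additivity
  have g0add : ∀ l₁ l₂ : dualLat B Λ, g0 (l₁ + l₂) = g0 l₁ + g0 l₂ := by
    intro l₁ l₂
    obtain ⟨w₁, hw₁, hw₁Γ⟩ := hex l₁
    obtain ⟨w₂, hw₂, hw₂Γ⟩ := hex l₂
    rw [hw₁, hw₂, ← Submodule.Quotient.mk_add]
    refine (hg0 _ _).mpr ?_
    have : ((l₁ + l₂ : dualLat B Λ) : V) + ((w₁ + w₂ : dualLat B 𝒱) : V)
        = (l₁.1 + w₁.1) + (l₂.1 + w₂.1) := by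
      push_cast
      abel
    rw [this]
    exact add_mem hw₁Γ hw₂Γ
  have d0add : ∀ w₁ w₂ : dualLat B 𝒱, d0 (w₁ + w₂) = d0 w₁ + d0 w₂ := by
    intro w₁ w₂
    obtain ⟨l₁, hl₁, hl₁Γ⟩ := hexd w₁
    obtain ⟨l₂, hl₂, hl₂Γ⟩ := hexd w₂
    rw [hl₁, hl₂, ← Submodule.Quotient.mk_add]
    refine (hd0 _ _).mpr ?_
    have : ((l₁ + l₂ : dualLat B Λ) : V) + ((w₁ + w₂ : dualLat B 𝒱) : V)
        = (l₁.1 + w₁.1) + (l₂.1 + w₂.1) := by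
      push_cast
      abel
    rw [this]
    exact add_mem hl₁Γ hl₂Γ
  -- descend to the discriminant groups
  have hkillγ : Submodule.comap (dualLat B Λ).subtype Λ ≤
      LinearMap.ker (AddMonoidHom.mk' g0 g0add).toIntLinearMap := by
    intro l hl
    have hlΛ : l.1 ∈ Λ := hl
    have : g0 l = Submodule.Quotient.mk (0 : dualLat B 𝒱) := by
      refine (hg0 l 0).mpr ?_
      simpa using hΛΓ hlΛ
    show g0 l = 0
    rw [this, Submodule.Quotient.mk_eq_zero]
    simp
  have hkillδ : Submodule.comap (dualLat B 𝒱).subtype 𝒱 ≤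
      LinearMap.ker (AddMonoidHom.mk' d0 d0add).toIntLinearMap := by
    intro w hw
    have hw𝒱 : w.1 ∈ 𝒱 := hw
    have : d0 w = Submodule.Quotient.mk (0 : dualLat B Λ) := by
      refine (hd0 w 0).mpr ?_
      simpa using h𝒱Γ hw𝒱
    show d0 w = 0
    rw [this, Submodule.Quotient.mk_eq_zero]
    simp
  set γhom := Submodule.liftQ _ (AddMonoidHom.mk' g0 g0add).toIntLinearMap hkillγ
    with hγhomdef
  set δhom := Submodule.liftQ _ (AddMonoidHom.mk' d0 d0add).toIntLinearMap hkillδ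
    with hδhomdef
  have hγmk : ∀ l : dualLat B Λ, γhom (Submodule.Quotient.mk l) = g0 l := fun l => rfl
  have hδmk : ∀ w : dualLat B 𝒱, δhom (Submodule.Quotient.mk w) = d0 w := fun w => rfl
  set γ : Disc B Λ ≃+ Disc B 𝒱 :=
    { toFun := γhom
      invFun := δhom
      left_inv := by
        intro a
        obtain ⟨l, rfl⟩ := Submodule.Quotient.mk_surjective _ a
        obtain ⟨w, hw, hwΓ⟩ := hex l
        show δhom (γhom (Submodule.Quotient.mk l)) = Submodule.Quotient.mk l
        rw [hγmk, hw, hδmk]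
        exact (hd0 w l).mpr hwΓ
      right_inv := by
        intro a
        obtain ⟨w, rfl⟩ := Submodule.Quotient.mk_surjective _ a
        obtain ⟨l, hl, hlΓ⟩ := hexd w
        show γhom (δhom (Submodule.Quotient.mk w)) = Submodule.Quotient.mk w
        rw [hδmk, hl, hγmk]
        exact (hg0 l w).mpr hlΓ
      map_add' := fun a b => γhom.map_add a b } with hγdef
  have hchar : ∀ (l : dualLat B Λ) (w : dualLat B 𝒱),
      γ (Submodule.Quotient.mk l) = Submodule.Quotient.mk w ↔ l.1 + w.1 ∈ Γ := by
    intro l w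
    show γhom (Submodule.Quotient.mk l) = Submodule.Quotient.mk w ↔ _
    rw [hγmk]
    exact hg0 l w
  refine ⟨γ, ?_, ?_⟩
  · intro l w hlw
    have hxΓ := (hchar l w).mp hlw
    obtain ⟨k, hk⟩ := hΓeven _ hxΓ
    refine ⟨k, ?_⟩
    have hwW : w.1 ∈ Wo := by
      have := w.2.1
      rwa [hspan𝒱] at this
    have hBlw : B l.1 w.1 = 0 := horth l.1 l.2.1 w.1 hwW
    have hBwl : B w.1 l.1 = 0 := by rw [hBsymm]; exact hBlw
    have hexp : B (l.1 + w.1) (l.1 + w.1)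
        = B l.1 l.1 + B l.1 w.1 + B w.1 l.1 + B w.1 w.1 := by
      rw [map_add]
      simp only [LinearMap.add_apply, map_add]
      ring
    rw [hexp, hBlw, hBwl] at hk
    linarith
  · intro x
    constructor
    · intro hx
      refine ⟨⟨(pr x : V), hpxdual x hx⟩, ⟨x - (pr x : V), hqxdual x hx⟩, by module, ?_⟩
      refine (hchar _ _).mpr ?_
      have : (pr x : V) + (x - (pr x : V)) = x := by abel
      rw [this]
      exact hx
    · rintro ⟨l, w, hxeq, hlw⟩
      rw [hxeq]
      exact (hchar l w).mp hlw
end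

section
/- With O9 = {3,5,6,9,15,19,23,24} an octad of the Golay code, the sublattice K̃ = { ν ∈ N : ⟨ν, f_n⟩ = 0 for all n ∉ O9 } of the Niemeier lattice N of type A_1^{24} is generated by the f_n with n ∈ O9 together with (1/2)Σ_{n ∈ O9} f_n. -/
/-- The weight of a vector in `𝔽₂²⁴`: the number of nonzero coordinates. -/
def weight (v : Fin 24 → ZMod 2) : ℕ := (Finset.univ.filter fun i => v i ≠ 0).card

/-- The special octad `𝒪₉ = {3,5,6,9,15,19,23,24}` (as a set of labels in `{1,…,24}`). -/
def O9 : Finset ℕ := {3, 5, 6, 9, 15, 19, 23, 24}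

/-- `Π̃ = { ν ∈ N : ⟨ν, f_n⟩ = 0 for all n ∈ 𝒪₉ }`. -/
def PiTilde : Set V24 :=
  { ν | ν ∈ NSet ∧ ∀ n : Fin 24, (n : ℕ) + 1 ∈ O9 → B24 ν (f24 n) = 0 }

/-- `K̃ = { ν ∈ N : ⟨ν, f_n⟩ = 0 for all n ∉ 𝒪₉ }`. -/
def KTilde : Set V24 :=
  { ν | ν ∈ NSet ∧ ∀ n : Fin 24, (n : ℕ) + 1 ∉ O9 → B24 ν (f24 n) = 0 }

/-- The half sum `(1/2) Σ_{n ∈ 𝒪₉} f_n`. -/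
def halfO9 : V24 := (2 : ℚ)⁻¹ • ∑ n ∈ Finset.univ.filter (fun n : Fin 24 => (n : ℕ) + 1 ∈ O9), f24 n

/- ---------------- auxiliary lemmas ---------------- -/

lemma B24_f24 (v : V24) (n : Fin 24) : B24 v (f24 n) = 2 * v n := by
  simp [B24, f24, mul_ite, mul_one, mul_zero, Finset.sum_ite_eq']

lemma hsum24 : ∀ i : Fin 24,
    indic (golayBasisSets 0) i + indic (golayBasisSets 1) i + indic (golayBasisSets 2) i +
    indic (golayBasisSets 3) i + indic (golayBasisSets 5) i + indic (golayBasisSets 6) i +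
    indic (golayBasisSets 8) i = indic O9 i := by decide

set_option maxHeartbeats 2000000 in
lemma key (ε : Fin 12 → ZMod 2)
    (h : ∀ i : Fin 24, (i : ℕ) + 1 ∉ O9 → (∑ j, ε j • indic (golayBasisSets j)) i = 0) :
    (∑ j, ε j • indic (golayBasisSets j)) = ε 0 • indic O9 := by
  have h1 := h ⟨0, by omega⟩ (by decide)
  have h2 := h ⟨1, by omega⟩ (by decide)
  have h4 := h ⟨3, by omega⟩ (by decide)
  have h7 := h ⟨6, by omega⟩ (by decide)
  have h8 := h ⟨7, by omega⟩ (by decide)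
  have h10 := h ⟨9, by omega⟩ (by decide)
  have h11 := h ⟨10, by omega⟩ (by decide)
  have h12 := h ⟨11, by omega⟩ (by decide)
  have h13 := h ⟨12, by omega⟩ (by decide)
  have h14 := h ⟨13, by omega⟩ (by decide)
  have h16 := h ⟨15, by omega⟩ (by decide)
  simp only [Finset.sum_apply, Pi.smul_apply, smul_eq_mul, Fin.sum_univ_succ,
    Finset.sum_empty, golayBasisSets, Matrix.cons_val_zero, Matrix.cons_val_succ, indic]
    at h1 h2 h4 h7 h8 h10 h11 h12 h13 h14 h16
  simp [Fin.succ, Fin.coe_ofNat_eq_mod] at h1 h2 h4 h7 h8 h10 h11 h12 h13 h14 h16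
  have two : ∀ x : ZMod 2, 2 * x = 0 := by decide
  have e1 : ε 1 = ε 0 := by linear_combination h1 + h7 + h8 + h10 + h11 + h12 + h14 + h16 + (-2) * two (ε 0) + (-2) * two (ε 1) + (-1) * two (ε 2) + (-2) * two (ε 4) + (-1) * two (ε 5) + (-2) * two (ε 6) + (-2) * two (ε 7) + (-2) * two (ε 8) + (-2) * two (ε 9) + (-3) * two (ε 10) + (-3) * two (ε 11)
  have e2 : ε 2 = ε 0 := by linear_combination h8 + h16 + (-1) * two (ε 0) + (-1) * two (ε 1) + (-1) * two (ε 6) + (-1) * two (ε 7) + (-1) * two (ε 8) + (-1) * two (ε 9) + (-1) * two (ε 10) + (-1) * two (ε 11)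
  have e3 : ε 3 = ε 0 := by linear_combination h1 + h4 + h10 + h14 + (-1) * two (ε 0) + (-1) * two (ε 1) + (-1) * two (ε 4) + (-1) * two (ε 5) + (-1) * two (ε 7) + (-1) * two (ε 8) + (-1) * two (ε 9) + (-1) * two (ε 10) + (-1) * two (ε 11)
  have e4 : ε 4 = 0 := by linear_combination h1 + h2 + h8 + h10 + h12 + h13 + h16 + (-2) * two (ε 0) + (-2) * two (ε 1) + (-1) * two (ε 2) + (-1) * two (ε 4) + (-1) * two (ε 5) + (-1) * two (ε 6) + (-2) * two (ε 7) + (-2) * two (ε 8) + (-2) * two (ε 9) + (-3) * two (ε 10) + (-3) * two (ε 11)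
  have e5 : ε 5 = ε 0 := by linear_combination h1 + h2 + h7 + h8 + h10 + h12 + h13 + h14 + (-2) * two (ε 0) + (-2) * two (ε 1) + (-1) * two (ε 2) + (-2) * two (ε 4) + (-1) * two (ε 5) + (-1) * two (ε 6) + (-2) * two (ε 7) + (-2) * two (ε 8) + (-2) * two (ε 9) + (-3) * two (ε 10) + (-3) * two (ε 11)
  have e6 : ε 6 = ε 0 := by linear_combination h7 + h8 + h10 + h11 + h12 + h14 + (-1) * two (ε 0) + (-2) * two (ε 1) + (-1) * two (ε 2) + (-2) * two (ε 4) + (-1) * two (ε 5) + (-1) * two (ε 6) + (-1) * two (ε 7) + (-1) * two (ε 8) + (-1) * two (ε 9) + (-2) * two (ε 10) + (-2) * two (ε 11)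
  have e7 : ε 7 = 0 := by linear_combination h7 + h10 + h11 + h13 + h14 + (-1) * two (ε 1) + (-1) * two (ε 2) + (-2) * two (ε 4) + (-1) * two (ε 5) + (-1) * two (ε 6) + (-1) * two (ε 8) + (-1) * two (ε 9) + (-2) * two (ε 10) + (-1) * two (ε 11)
  have e8 : ε 8 = ε 0 := by linear_combination h7 + h16 + (-1) * two (ε 0) + (-1) * two (ε 1) + (-1) * two (ε 6) + (-1) * two (ε 7) + (-1) * two (ε 9) + (-1) * two (ε 10) + (-1) * two (ε 11)
  have e9 : ε 9 = 0 := by linear_combination h8 + h10 + h12 + h13 + h14 + h16 + (-1) * two (ε 0) + (-2) * two (ε 1) + (-1) * two (ε 2) + (-2) * two (ε 4) + (-1) * two (ε 5) + (-1) * two (ε 6) + (-1) * two (ε 7) + (-2) * two (ε 8) + (-1) * two (ε 9) + (-2) * two (ε 10) + (-2) * two (ε 11)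
  have e10 : ε 10 = 0 := by linear_combination h1 + h2 + h7 + h8 + h13 + h14 + (-1) * two (ε 0) + (-1) * two (ε 1) + (-1) * two (ε 2) + (-1) * two (ε 4) + (-1) * two (ε 5) + (-1) * two (ε 6) + (-2) * two (ε 7) + (-2) * two (ε 8) + (-2) * two (ε 9) + (-2) * two (ε 10) + (-2) * two (ε 11)
  have e11 : ε 11 = 0 := by linear_combination h2 + h7 + h11 + h12 + h13 + h14 + (-1) * two (ε 0) + (-1) * two (ε 1) + (-1) * two (ε 2) + (-2) * two (ε 4) + (-1) * two (ε 5) + (-1) * two (ε 6) + (-1) * two (ε 7) + (-1) * two (ε 8) + (-1) * two (ε 9) + (-2) * two (ε 10) + (-1) * two (ε 11)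
  funext i
  have hs := hsum24 i
  simp only [Finset.sum_apply, Pi.smul_apply, smul_eq_mul, Fin.sum_univ_succ, Finset.sum_empty]
  simp [Fin.succ, Fin.coe_ofNat_eq_mod]
  rw [e1, e2, e3, e4, e5, e6, e7, e8, e9, e10, e11]
  linear_combination ε 0 * hs

lemma indicO9_mem : indic O9 ∈ golayCode := by
  have hg : ∀ j : Fin 12, indic (golayBasisSets j) ∈ golayCode :=
    fun j => Submodule.subset_span ⟨j, rfl⟩
  have : indic O9 = indic (golayBasisSets 0) + indic (golayBasisSets 1) +
      indic (golayBasisSets 2) + indic (golayBasisSets 3) + indic (golayBasisSets 5) +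
      indic (golayBasisSets 6) + indic (golayBasisSets 8) := by
    funext i
    simpa using (hsum24 i).symm
  rw [this]
  exact add_mem (add_mem (add_mem (add_mem (add_mem (add_mem (hg 0) (hg 1)) (hg 2)) (hg 3))
    (hg 5)) (hg 6)) (hg 8)

lemma halfO9_apply (i : Fin 24) : halfO9 i = if (i : ℕ) + 1 ∈ O9 then 1/2 else 0 := by
  simp only [halfO9, Pi.smul_apply, Finset.sum_apply, f24, smul_eq_mul]
  rw [Finset.sum_ite_eq (Finset.univ.filter fun n : Fin 24 => (n : ℕ) + 1 ∈ O9) i (fun _ => (1:ℚ))]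
  simp only [Finset.mem_filter, Finset.mem_univ, true_and]
  split <;> norm_num

lemma mem_KTilde_iff (v : V24) :
    v ∈ KTilde ↔ v ∈ NSet ∧ ∀ n : Fin 24, (n : ℕ) + 1 ∉ O9 → v n = 0 := by
  unfold KTilde
  simp only [Set.mem_setOf_eq, B24_f24]
  constructor
  · rintro ⟨h1, h2⟩
    exact ⟨h1, fun n hn => by have := h2 n hn; linarith⟩
  · rintro ⟨h1, h2⟩
    exact ⟨h1, fun n hn => by rw [h2 n hn]; ring⟩

lemma zsmul_ite (c : ℤ) (i n : Fin 24) :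
    (c • if i = n then (1:ℚ) else 0) = (if i = n then (c : ℚ) else 0) := by
  split <;> simp

/-- `KTilde` as a `ℤ`-submodule. -/
def KMod : Submodule ℤ V24 where
  carrier := KTilde
  zero_mem' := by
    refine (mem_KTilde_iff 0).mpr ⟨⟨0, by simp, ?_⟩, fun n _ => rfl⟩
    have h0 : (fun i : Fin 24 => (((0 : Fin 24 → ℤ) i : ℤ) : ZMod 2)) = 0 := by
      funext i; simp
    rw [h0]; exact zero_mem golayCode
  add_mem' := by
    intro a b ha hb
    obtain ⟨⟨w, hw, hgw⟩, ha2⟩ := (mem_KTilde_iff a).mp ha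
    obtain ⟨⟨u, hu, hgu⟩, hb2⟩ := (mem_KTilde_iff b).mp hb
    refine (mem_KTilde_iff _).mpr ⟨⟨w + u, fun i => ?_, ?_⟩, fun n hn => ?_⟩
    · simp [hw i, hu i]; ring
    · have : (fun i => (((w + u) i : ℤ) : ZMod 2)) =
          (fun i => ((w i : ZMod 2))) + fun i => ((u i : ZMod 2)) := by
        funext i; simp
      rw [this]; exact add_mem hgw hgu
    · simp [Pi.add_apply, ha2 n hn, hb2 n hn]
  smul_mem' := by
    intro z a ha
    obtain ⟨⟨w, hw, hgw⟩, ha2⟩ := (mem_KTilde_iff a).mp ha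
    refine (mem_KTilde_iff _).mpr ⟨⟨z • w, fun i => ?_, ?_⟩, fun n hn => ?_⟩
    · simp [hw i]; ring
    · have : (fun i => (((z • w) i : ℤ) : ZMod 2)) =
          (z : ZMod 2) • fun i => ((w i : ZMod 2)) := by
        funext i; simp
      rw [this]; exact Submodule.smul_mem _ _ hgw
    · simp [Pi.smul_apply, ha2 n hn]

lemma generators_mem :
    insert halfO9 { v | ∃ n : Fin 24, (n : ℕ) + 1 ∈ O9 ∧ v = f24 n } ⊆ KTilde := by
  intro v hv
  rw [Set.mem_insert_iff] at hv
  rcases hv with rfl | ⟨n, hn, rfl⟩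
  · refine (mem_KTilde_iff _).mpr
      ⟨⟨fun i => if (i : ℕ) + 1 ∈ O9 then 1 else 0, fun i => ?_, ?_⟩, fun n hn => ?_⟩
    · rw [halfO9_apply]; by_cases hP : (i : ℕ) + 1 ∈ O9 <;> simp [hP]
    · have : (fun i : Fin 24 => (((if (i : ℕ) + 1 ∈ O9 then 1 else 0 : ℤ)) : ZMod 2)) =
          indic O9 := by
        funext i; simp [indic, apply_ite]
      rw [this]; exact indicO9_mem
    · rw [halfO9_apply, if_neg hn]
  · refine (mem_KTilde_iff _).mpr
      ⟨⟨fun i => if i = n then 2 else 0, fun i => ?_, ?_⟩, fun m hm => ?_⟩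
    · show f24 n i = _; simp only [f24]; by_cases hP : i = n <;> simp [hP]
    · have : (fun i : Fin 24 => (((if i = n then 2 else 0 : ℤ)) : ZMod 2)) = 0 := by
        funext i
        show ((if i = n then (2:ℤ) else 0 : ℤ) : ZMod 2) = 0
        split <;> decide
      rw [this]; exact zero_mem golayCode
    · have hmn : m ≠ n := fun h => hm (h ▸ hn)
      simp [f24, hmn]

/-- The sublattice `K̃ = { ν ∈ N : ⟨ν, f_n⟩ = 0 for all n ∉ 𝒪₉ }` of the Niemeier
lattice `N` of type `A₁²⁴` is generated by the `f_n` with `n ∈ 𝒪₉` together with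
`(1/2) Σ_{n ∈ 𝒪₉} f_n`. -/
theorem kTilde_generators :
    KTilde = ↑(Submodule.span ℤ
      (insert halfO9 { v | ∃ n : Fin 24, (n : ℕ) + 1 ∈ O9 ∧ v = f24 n })) := by
  apply Set.Subset.antisymm
  · -- hard direction
    intro v hv
    obtain ⟨⟨w, hw, hgw⟩, hv0⟩ := (mem_KTilde_iff v).mp hv
    have hw0 : ∀ n : Fin 24, (n : ℕ) + 1 ∉ O9 → w n = 0 := by
      intro n hn
      have h1 := hw n; rw [hv0 n hn] at h1
      have h2 : (w n : ℚ) = 0 := by linarith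
      exact_mod_cast h2
    rw [golayCode, Submodule.mem_span_range_iff_exists_fun] at hgw
    obtain ⟨ε, hε⟩ := hgw
    have hkey := key ε (by
      intro i hi
      rw [hε]
      simp [hw0 i hi])
    rw [hε] at hkey
    have h01 : ∀ x : ZMod 2, x = 0 ∨ x = 1 := by decide
    have hf : ∀ n : Fin 24, (n : ℕ) + 1 ∈ O9 → f24 n ∈ Submodule.span ℤ
        (insert halfO9 { v | ∃ n : Fin 24, (n : ℕ) + 1 ∈ O9 ∧ v = f24 n }) := by
      intro n hn
      exact Submodule.subset_span (Set.mem_insert_iff.mpr (Or.inr ⟨n, hn, rfl⟩))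
    rcases h01 (ε 0) with h0 | h0
    · -- all w i even
      have hdvd : ∀ i, (2 : ℤ) ∣ w i := by
        intro i
        have hi := congrFun hkey i
        rw [h0, Pi.smul_apply, zero_smul] at hi
        exact (ZMod.intCast_zmod_eq_zero_iff_dvd (w i) 2).mp hi
      have hv_eq : v = ∑ n ∈ Finset.univ.filter (fun n : Fin 24 => (n : ℕ) + 1 ∈ O9),
          (w n / 2) • f24 n := by
        funext i
        rw [Finset.sum_apply]
        simp only [Pi.smul_apply, f24, zsmul_ite]
        rw [Finset.sum_ite_eq (Finset.univ.filter fun n : Fin 24 => (n : ℕ) + 1 ∈ O9) i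
          (fun n => ((w n / 2 : ℤ) : ℚ))]
        simp only [Finset.mem_filter, Finset.mem_univ, true_and]
        split
        · rename_i hmem
          rw [hw i]
          have h2 := Int.ediv_mul_cancel (hdvd i)
          have h3 : ((w i / 2 : ℤ) : ℚ) * 2 = (w i : ℚ) := by exact_mod_cast h2
          linarith
        · rename_i hmem
          exact hv0 i hmem
      rw [hv_eq]
      exact Submodule.sum_mem _ fun n hn =>
        Submodule.smul_mem _ _ (hf n (Finset.mem_filter.mp hn).2)
    · -- w ≡ indicator of O9
      set u : Fin 24 → ℤ := fun i => w i - (if (i : ℕ) + 1 ∈ O9 then 1 else 0) with hu_def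
      have hdvd : ∀ i, (2 : ℤ) ∣ u i := by
        intro i
        have hwi : ((w i : ℤ) : ZMod 2) = indic O9 i := by
          have hi := congrFun hkey i
          rwa [h0, Pi.smul_apply, one_smul] at hi
        have hcast : ((u i : ℤ) : ZMod 2) = (w i : ZMod 2) - indic O9 i := by
          simp only [hu_def, Int.cast_sub]
          congr 1
          simp [indic, apply_ite]
        have : ((u i : ℤ) : ZMod 2) = 0 := by rw [hcast, hwi, sub_self]
        exact (ZMod.intCast_zmod_eq_zero_iff_dvd (u i) 2).mp this
      have hv_eq : v = halfO9 + ∑ n ∈ Finset.univ.filter (fun n : Fin 24 => (n : ℕ) + 1 ∈ O9),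
          (u n / 2) • f24 n := by
        funext i
        rw [Pi.add_apply, Finset.sum_apply]
        simp only [Pi.smul_apply, f24, zsmul_ite]
        rw [Finset.sum_ite_eq (Finset.univ.filter fun n : Fin 24 => (n : ℕ) + 1 ∈ O9) i
          (fun n => ((u n / 2 : ℤ) : ℚ))]
        simp only [Finset.mem_filter, Finset.mem_univ, true_and]
        rw [halfO9_apply]
        split
        · rename_i hmem
          rw [hw i]
          have h2 := Int.ediv_mul_cancel (hdvd i)
          have h3 : ((u i / 2 : ℤ) : ℚ) * 2 = (u i : ℚ) := by exact_mod_cast h2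
          have h4 : (u i : ℚ) = (w i : ℚ) - 1 := by
            simp [hu_def, if_pos hmem]
          linarith
        · rename_i hmem
          rw [hv0 i hmem]; ring
      rw [hv_eq]
      refine add_mem (Submodule.subset_span (Set.mem_insert _ _)) ?_
      exact Submodule.sum_mem _ fun n hn =>
        Submodule.smul_mem _ _ (hf n (Finset.mem_filter.mp hn).2)
  · -- easy direction
    have hle : Submodule.span ℤ
        (insert halfO9 { v | ∃ n : Fin 24, (n : ℕ) + 1 ∈ O9 ∧ v = f24 n }) ≤ KMod :=
      Submodule.span_le.mpr generators_mem
    exact fun v hv => hle hv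
end

section
/- Let n_0 ∈ O9 and P̃_{n_0} = { ν ∈ N : ⟨ν, f_n⟩ = 0 for all n ∈ O9\{n_0} }. Then P̃_{n_0} = Π̃ ⊕ span_Z{f_{n_0}}, where Π̃ = { ν ∈ N : ⟨ν, f_n⟩ = 0 for all n ∈ O9 }. -/
def phiO9 : (Fin 24 → ZMod 2) →ₗ[ZMod 2] ZMod 2 where
  toFun v := ∑ i ∈ Finset.univ.filter (fun i : Fin 24 => (i : ℕ) + 1 ∈ O9), v i
  map_add' a b := by simp [Finset.sum_add_distrib]
  map_smul' c v := by simp [Finset.mul_sum]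

lemma phiO9_code {v : Fin 24 → ZMod 2} (hv : v ∈ golayCode) : phiO9 v = 0 := by
  have h : golayCode ≤ LinearMap.ker phiO9 := by
    rw [golayCode, Submodule.span_le]
    rintro _ ⟨i, rfl⟩
    simp only [SetLike.mem_coe, LinearMap.mem_ker]
    fin_cases i <;> (show phiO9 _ = 0; simp only [phiO9, LinearMap.coe_mk, AddHom.coe_mk]; decide)
  exact h hv

lemma B24_f (ν : V24) (n : Fin 24) : B24 ν (f24 n) = 2 * ν n := by
  simp [B24, f24, mul_ite]

/-- For `n₀ ∈ 𝒪₉`, the sublattice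
`P̃_{n₀} = { ν ∈ N : ⟨ν, f_n⟩ = 0 for all n ∈ 𝒪₉ \ {n₀} }` is the (direct, orthogonal)
sum `Π̃ ⊕ span_ℤ{f_{n₀}}`, where `Π̃ = { ν ∈ N : ⟨ν, f_n⟩ = 0 for all n ∈ 𝒪₉ }`. -/
theorem pTilde_n0_splits (n₀ : Fin 24) (hn₀ : (n₀ : ℕ) + 1 ∈ O9) :
    ({ ν | ν ∈ NSet ∧ ∀ n : Fin 24, ((n : ℕ) + 1 ∈ O9 ∧ n ≠ n₀) → B24 ν (f24 n) = 0 }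
        = { v | ∃ p ∈ PiTilde, ∃ m : ℤ, v = p + (m : ℚ) • f24 n₀ }) ∧
    (∀ p ∈ PiTilde, ∀ m : ℤ, p + (m : ℚ) • f24 n₀ = 0 → p = 0 ∧ m = 0) := by
  constructor
  · ext ν
    simp only [Set.mem_setOf_eq]
    constructor
    · rintro ⟨⟨w, hw, hwc⟩, hB⟩
      have hν0 : ∀ n : Fin 24, (n : ℕ) + 1 ∈ O9 → n ≠ n₀ → ν n = 0 := by
        intro n h1 h2
        have := hB n ⟨h1, h2⟩
        rw [B24_f] at this
        linarith
      have hw0 : ∀ n : Fin 24, (n : ℕ) + 1 ∈ O9 → n ≠ n₀ → w n = 0 := by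
        intro n h1 h2
        have h3 := hν0 n h1 h2
        rw [hw n] at h3
        have h4 : (w n : ℚ) = 0 := by linarith
        exact_mod_cast h4
      have hphi := phiO9_code hwc
      have hsum : phiO9 (fun i => ((w i : ZMod 2))) = ((w n₀ : ZMod 2)) := by
        show (∑ i ∈ Finset.univ.filter (fun i : Fin 24 => (i : ℕ) + 1 ∈ O9),
            ((w i : ZMod 2))) = _
        refine Finset.sum_eq_single_of_mem n₀
          (Finset.mem_filter.mpr ⟨Finset.mem_univ _, hn₀⟩) ?_
        intro b hb hbne
        rw [hw0 b (Finset.mem_filter.mp hb).2 hbne]; simp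
      rw [hsum] at hphi
      obtain ⟨m, hm⟩ : (2 : ℤ) ∣ w n₀ := (ZMod.intCast_zmod_eq_zero_iff_dvd _ 2).mp hphi
      refine ⟨ν - (m : ℚ) • f24 n₀, ⟨⟨fun i => if i = n₀ then 0 else w i, ?_, ?_⟩, ?_⟩,
        m, by ring⟩
      · intro i
        by_cases h : i = n₀
        · simp only [Pi.sub_apply, Pi.smul_apply, f24, if_pos h, smul_eq_mul, mul_one]
          rw [h, hw n₀, hm]
          push_cast; ring
        · simp only [Pi.sub_apply, Pi.smul_apply, f24, if_neg h, smul_eq_mul, mul_zero,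
            sub_zero, hw i]
      · show (fun i : Fin 24 => (((if i = n₀ then 0 else w i : ℤ) : ZMod 2))) ∈ golayCode
        have hfun : (fun i : Fin 24 => (((if i = n₀ then 0 else w i : ℤ) : ZMod 2)))
            = fun i => ((w i : ZMod 2)) := by
          funext i
          by_cases h : i = n₀
          · rw [if_pos h, Int.cast_zero, h, hphi]
          · rw [if_neg h]
        rw [hfun]; exact hwc
      · intro n hn
        rw [B24_f]
        by_cases h : n = n₀
        · simp only [Pi.sub_apply, Pi.smul_apply, f24, if_pos h, smul_eq_mul, mul_one]
          rw [h, hw n₀, hm]; push_cast; ring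
        · simp only [Pi.sub_apply, Pi.smul_apply, f24, if_neg h, smul_eq_mul, mul_zero,
            sub_zero, hν0 n hn h, mul_zero]
    · rintro ⟨p, ⟨⟨w, hw, hwc⟩, hO⟩, m, rfl⟩
      constructor
      · refine ⟨fun i => w i + if i = n₀ then 2 * m else 0, ?_, ?_⟩
        · intro i
          by_cases h : i = n₀
          · simp only [Pi.add_apply, Pi.smul_apply, f24, if_pos h, smul_eq_mul, mul_one, hw i]
            push_cast; ring
          · simp only [Pi.add_apply, Pi.smul_apply, f24, if_neg h, smul_eq_mul, mul_zero,
              add_zero, hw i]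
        · show (fun i : Fin 24 => (((w i + if i = n₀ then 2 * m else 0 : ℤ) : ZMod 2)))
              ∈ golayCode
          have hfun : (fun i : Fin 24 => (((w i + if i = n₀ then 2 * m else 0 : ℤ) : ZMod 2)))
              = fun i => ((w i : ZMod 2)) := by
            funext i
            by_cases h : i = n₀
            · rw [if_pos h]
              push_cast
              rw [show ((2 : ZMod 2)) = 0 from rfl]
              ring
            · rw [if_neg h, add_zero]
          rw [hfun]; exact hwc
      · intro n hn
        rw [B24_f]
        simp only [Pi.add_apply, Pi.smul_apply, f24, if_neg hn.2, smul_eq_mul, mul_zero,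
          add_zero]
        have := hO n hn.1
        rw [B24_f] at this
        exact this
  · intro p hp m h
    have hp0 : p n₀ = 0 := by
      have := hp.2 n₀ hn₀
      rw [B24_f] at this
      linarith
    have hme : (m : ℚ) = 0 := by
      have h2 := congrFun h n₀
      simp [f24, hp0] at h2
      exact_mod_cast h2
    have hm : m = 0 := by exact_mod_cast hme
    refine ⟨?_, hm⟩
    funext i
    have h2 := congrFun h i
    simp only [Pi.add_apply, Pi.smul_apply, hme, zero_mul, smul_eq_mul, Pi.zero_apply] at h2
    simpa using h2
end

section
/- The sixteen octads H_1 = {1,2,4,12,13,14,17,18}, H_2 = {1,2,8,11,14,16,17,22}, H_3 = {1,8,10,11,13,17,18,21}, H_4 = {1,4,11,13,14,16,20,21}, H_5 = {2,7,8,10,12,17,18,22} are Golay codewords disjoint from the octad O9 = {3,5,6,9,15,19,23,24}, and they span a 5-dimensional subspace of the Golay code consisting of all codewords disjoint from O9. -/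
/-- The five octads `ℋ₁, …, ℋ₅` disjoint from `𝒪₉`. -/
def Hocts : Fin 5 → Finset ℕ :=
  ![{1,2,4,12,13,14,17,18}, {1,2,8,11,14,16,17,22}, {1,8,10,11,13,17,18,21},
    {1,4,11,13,14,16,20,21}, {2,7,8,10,12,17,18,22}]

/-- An alternative basis of the Golay code: the five octads `ℋᵢ` followed by seven
codewords in echelon form on the coordinates of `𝒪₉`. -/
def PSets : Fin 12 → Finset ℕ :=
  ![{1,2,4,12,13,14,17,18}, {1,2,8,11,14,16,17,22}, {1,8,10,11,13,17,18,21},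
    {1,4,11,13,14,16,20,21}, {2,7,8,10,12,17,18,22},
    {1,2,3,10,11,16,21,24}, {5,10,11,12,18,21,22,24}, {1,6,7,8,14,17,18,24},
    {1,2,4,8,9,11,12,13,16,17,21,24}, {1,7,10,12,13,14,15,17,18,21,22,24},
    {1,4,8,13,14,16,17,18,19,21,22,24}, {1,8,10,11,12,13,14,16,21,22,23,24}]

/-- Change of basis: `PSets` in terms of `golayBasisSets`. -/
def M1 : Fin 12 → Fin 12 → ZMod 2 :=
  ![![1,0,1,0,0,0,1,0,1,1,0,0], ![0,1,0,0,0,0,1,0,1,1,0,1], ![0,0,1,0,0,0,1,1,0,1,1,0],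
    ![1,1,0,0,1,0,1,1,0,1,1,1], ![1,1,0,0,0,0,1,0,0,1,1,1],
    ![0,0,1,0,0,1,0,0,1,0,0,0], ![1,0,1,0,0,1,0,0,1,0,0,0], ![1,1,0,1,0,1,0,0,0,0,0,0],
    ![0,1,0,0,0,1,1,0,1,0,0,0], ![1,0,1,0,0,1,1,0,0,0,0,0], ![1,1,1,0,0,1,1,0,0,0,0,0],
    ![1,0,1,0,0,1,0,0,0,0,0,0]]

/-- Change of basis: `golayBasisSets` in terms of `PSets`. -/
def M2 : Fin 12 → Fin 12 → ZMod 2 :=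
  ![![0,0,0,0,0,1,1,0,0,0,0,0], ![0,0,0,0,0,0,0,0,0,1,1,0], ![0,0,0,0,0,1,0,0,1,0,1,1],
    ![0,0,0,0,0,1,0,1,1,1,0,0], ![1,1,1,1,0,0,0,0,0,0,0,0], ![0,0,0,0,0,0,1,0,1,0,1,0],
    ![0,0,0,0,0,0,0,0,0,1,0,1], ![1,1,1,0,1,0,0,0,0,0,0,0], ![0,0,0,0,0,0,1,0,0,0,0,1],
    ![1,0,0,0,0,0,0,0,1,1,1,1], ![0,1,0,0,1,1,0,0,0,0,0,1], ![1,1,0,0,0,0,1,0,1,1,0,1]]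

/-- Pivot coordinates (labels `3,5,6,9,15,19,23` of `𝒪₉`). -/
def piv : Fin 7 → Fin 24 := ![2,4,5,8,14,18,22]

set_option maxHeartbeats 4000000 in
theorem F1 : ∀ j : Fin 12, ∑ i, M1 j i • indic (golayBasisSets i) = indic (PSets j) := by
  decide

set_option maxHeartbeats 4000000 in
theorem F2 : ∀ j : Fin 12, ∑ i, M2 j i • indic (PSets i) = indic (golayBasisSets j) := by
  decide

theorem F3 : ∀ i : Fin 12, ∀ j : Fin 7, indic (PSets i) (piv j)
    = if i = Fin.natAdd 5 j then 1 else 0 := by decide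

theorem F4 : ∀ i : Fin 5, ∀ n : Fin 24, (n : ℕ) + 1 ∈ O9 → indic (Hocts i) n = 0 := by decide

theorem F5 : ∀ j : Fin 7, ((piv j : ℕ) + 1) ∈ O9 := by decide

theorem F6 : ∀ g : Fin 5 → ZMod 2, ∑ i, g i • indic (Hocts i) = 0 → ∀ i, g i = 0 := by decide

theorem F7 : ∀ i : Fin 5, weight (indic (Hocts i)) = 8 := by decide

theorem F8 : ∀ i : Fin 5, Disjoint (Hocts i) O9 := by decide

theorem F9 : ∀ i : Fin 5, PSets (Fin.castAdd 7 i) = Hocts i := by decide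

theorem memP : ∀ j : Fin 12, indic (PSets j) ∈ golayCode := by
  intro j
  unfold golayCode
  exact (Submodule.mem_span_range_iff_exists_fun _).2 ⟨M1 j, F1 j⟩

theorem hspan : golayCode
    = Submodule.span (ZMod 2) (Set.range fun i : Fin 12 => indic (PSets i)) := by
  apply le_antisymm
  · unfold golayCode
    rw [Submodule.span_le]
    rintro _ ⟨j, rfl⟩
    exact (Submodule.mem_span_range_iff_exists_fun _).2 ⟨M2 j, F2 j⟩
  · rw [Submodule.span_le]
    rintro _ ⟨j, rfl⟩
    exact memP j

theorem memH : ∀ i : Fin 5, indic (Hocts i) ∈ golayCode := fun i =>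
  F9 i ▸ memP (Fin.castAdd 7 i)

set_option maxHeartbeats 2000000 in
/-- The five octads `ℋ₁, …, ℋ₅` are Golay codewords disjoint from the octad `𝒪₉`, and
they span a 5-dimensional subspace of the Golay code consisting exactly of all
codewords disjoint from `𝒪₉`. -/
theorem five_octads_span :
    (∀ i : Fin 5, indic (Hocts i) ∈ golayCode ∧ weight (indic (Hocts i)) = 8 ∧
      Disjoint (Hocts i) O9) ∧
    LinearIndependent (ZMod 2) (fun i : Fin 5 => indic (Hocts i)) ∧
    (↑(Submodule.span (ZMod 2) (Set.range fun i : Fin 5 => indic (Hocts i)))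
      = { c | c ∈ golayCode ∧ ∀ n : Fin 24, (n : ℕ) + 1 ∈ O9 → c n = 0 }) := by
  refine ⟨fun i => ⟨memH i, F7 i, F8 i⟩, Fintype.linearIndependent_iff.mpr F6, ?_⟩
  ext c
  simp only [SetLike.mem_coe, Set.mem_setOf_eq]
  constructor
  · intro hc
    obtain ⟨a, rfl⟩ := (Submodule.mem_span_range_iff_exists_fun _).1 hc
    refine ⟨Submodule.sum_mem _ fun i _ => Submodule.smul_mem _ _ (memH i), ?_⟩
    intro n hn
    rw [Finset.sum_apply]
    exact Finset.sum_eq_zero fun i _ => by rw [Pi.smul_apply, F4 i n hn, smul_zero]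
  · rintro ⟨hcG, hvan⟩
    rw [hspan] at hcG
    obtain ⟨g, hg⟩ := (Submodule.mem_span_range_iff_exists_fun _).1 hcG
    have hz : ∀ j : Fin 7, g (Fin.natAdd 5 j) = 0 := by
      intro j
      have h1 := hvan (piv j) (F5 j)
      rw [← hg, Finset.sum_apply] at h1
      simpa [smul_eq_mul, F3, mul_ite, Finset.sum_ite_eq'] using h1
    refine (Submodule.mem_span_range_iff_exists_fun _).2 ⟨fun i => g (Fin.castAdd 7 i), ?_⟩
    rw [← hg]
    have hcast : (∑ i : Fin 12, g i • indic (PSets i))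
        = ∑ i : Fin (5+7), g i • indic (PSets i) := rfl
    rw [hcast, Fin.sum_univ_add]
    have h2 : ∑ j : Fin 7, g (Fin.natAdd 5 j) • indic (PSets (Fin.natAdd 5 j)) = 0 :=
      Finset.sum_eq_zero fun j _ => by rw [hz j, zero_smul]
    rw [h2, add_zero]
    exact Finset.sum_congr rfl fun i _ => by rw [F9 i]
end

section
/- The map I: {1,2,4,7,8,10,11,12,13,14,16,17,18,20,21,22} → F_2^4 defined by I(1)=(0,0,0,0), I(2)=(0,0,1,1), I(4)=(0,1,1,0), I(7)=(1,1,1,1), I(8)=(1,0,0,1), I(10)=(1,1,0,1), I(11)=(1,0,0,0), I(12)=(0,1,1,1), I(13)=(0,1,0,0), I(14)=(0,0,1,0), I(16)=(1,0,1,0), I(17)=(0,0,0,1), I(18)=(0,1,0,1), I(20)=(1,1,1,0), I(21)=(1,1,0,0), I(22)=(1,0,1,1) is a bijection, and for each i ∈ {1,2,3,4} the image under I of the octad H_i (for i=1,...,4 as listed) equals the linear hyperplane { a ∈ F_2^4 : a_i = 0 }. -/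
/-- The hypercube `𝔽₂⁴`. -/
abbrev F16 := Fin 4 → ZMod 2

/-- Shorthand for a vector in `𝔽₂⁴`. -/
def v4 (a b c d : ZMod 2) : F16 := ![a, b, c, d]

/-- The complement of the octad `𝒪₉ = {3,5,6,9,15,19,23,24}` in `{1,…,24}`. -/
def O9compl : Finset ℕ := {1, 2, 4, 7, 8, 10, 11, 12, 13, 14, 16, 17, 18, 20, 21, 22}

/-- The labelling map `I` from the complement of `𝒪₉` to the hypercube `𝔽₂⁴`. -/
def Imap : ℕ → F16
  | 1 => v4 0 0 0 0
  | 2 => v4 0 0 1 1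
  | 4 => v4 0 1 1 0
  | 7 => v4 1 1 1 1
  | 8 => v4 1 0 0 1
  | 10 => v4 1 1 0 1
  | 11 => v4 1 0 0 0
  | 12 => v4 0 1 1 1
  | 13 => v4 0 1 0 0
  | 14 => v4 0 0 1 0
  | 16 => v4 1 0 1 0
  | 17 => v4 0 0 0 1
  | 18 => v4 0 1 0 1
  | 20 => v4 1 1 1 0
  | 21 => v4 1 1 0 0
  | 22 => v4 1 0 1 1
  | _ => v4 0 0 0 0

/-- The first four of the octads `ℋ₁, …, ℋ₅` disjoint from `𝒪₉`. -/
def Hocts4 : Fin 4 → Finset ℕ :=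
  ![{1,2,4,12,13,14,17,18}, {1,2,8,11,14,16,17,22}, {1,8,10,11,13,17,18,21},
    {1,4,11,13,14,16,20,21}]

/-- The map `I` is a bijection from the 16-element complement of `𝒪₉` onto `𝔽₂⁴`, and
for each `i ∈ {1,2,3,4}` the image under `I` of the octad `ℋᵢ` is the linear hyperplane
`{a ∈ 𝔽₂⁴ : a_i = 0}`. -/
theorem Imap_bijection_hyperplanes :
    Set.BijOn Imap ↑O9compl Set.univ ∧
    ∀ i : Fin 4, Imap '' ↑(Hocts4 i) = { a : F16 | a i = 0 } := by
  have hinj : ∀ a ∈ O9compl, ∀ b ∈ O9compl, Imap a = Imap b → a = b := by decide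
  have hsurj : ∀ a : F16, ∃ n ∈ O9compl, Imap n = a := by decide
  have h2 : ∀ i : Fin 4, ∀ a : F16, (∃ n ∈ Hocts4 i, Imap n = a) ↔ a i = 0 := by decide
  refine ⟨⟨fun x _ => trivial, fun a ha b hb h => hinj a ha b hb h, fun a _ => ?_⟩, ?_⟩
  · obtain ⟨n, hn, hna⟩ := hsurj a
    exact ⟨n, hn, hna⟩
  · intro i
    ext a
    simp only [Set.mem_image, Set.mem_setOf_eq, Finset.mem_coe]
    exact h2 i a
end
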